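/- arXiv:0805.3167 — 4 statements merged into one kernel-verified Lean document; each statement's English description precedes it below -/
import Mathlib

section
/- Let ξ be a complex random variable with finite nonzero variance. Then there exist a real θ and a constant κ ≥ 1 such that the random variable e^{iθ}ξ has κ-controlled second moment; that is, E|e^{iθ}ξ|² ≤ κ and for all complex z, w: E[ Re(z·e^{iθ}ξ − w)² · 1_{|ξ| ≤ κ} ] ≥ (1/κ)·Re(z)². -/
open MeasureTheory ProbabilityTheory Complex

private lemma exists_two_sided {Ω : Type*} [MeasureSpace Ω] [IsProbabilityMeasure (ℙ : Measure Ω)]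
    (F : Ω → ℝ) (h : ¬ ∃ c : ℝ, F =ᵐ[ℙ] fun _ => c) :
    ∃ q q' : ℝ, q < q' ∧ ℙ {ω | F ω ≤ q} ≠ 0 ∧ ℙ {ω | q' ≤ F ω} ≠ 0 := by
  by_contra hcon
  push_neg at hcon
  have H : ∀ q q' : ℝ, q < q' → ℙ {ω | F ω ≤ q} = 0 ∨ ℙ {ω | q' ≤ F ω} = 0 := by
    intro q q' hqq'
    rcases eq_or_ne (ℙ {ω | F ω ≤ q}) 0 with h0 | h0
    · exact Or.inl h0
    · exact Or.inr (hcon q q' hqq' h0)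
  set S : Set ℚ := {q : ℚ | ℙ {ω | F ω ≤ (q : ℝ)} = 0} with hSdef
  have Sdc : ∀ q s : ℚ, q ≤ s → s ∈ S → q ∈ S := by
    intro q s hqs hs
    have hsub : {ω | F ω ≤ (q : ℝ)} ⊆ {ω | F ω ≤ (s : ℝ)} := by
      intro ω hω
      simp only [Set.mem_setOf_eq] at hω ⊢
      have hqs' : (q : ℝ) ≤ (s : ℝ) := by exact_mod_cast hqs
      linarith
    exact measure_mono_null hsub hs
  by_cases hSne : S.Nonempty
  · by_cases hScne : ∃ q : ℚ, q ∉ S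
    · obtain ⟨q₀, hq₀⟩ := hSne
      obtain ⟨q₁, hq₁⟩ := hScne
      have hub : ∀ x ∈ ((↑) : ℚ → ℝ) '' S, x ≤ (q₁ : ℝ) := by
        rintro x ⟨q, hq, rfl⟩
        have : q ≤ q₁ := by
          by_contra hlt
          exact hq₁ (Sdc q₁ q (le_of_not_ge hlt) hq)
        exact_mod_cast this
      have hbdd : BddAbove (((↑) : ℚ → ℝ) '' S) := ⟨q₁, hub⟩
      have hne : (((↑) : ℚ → ℝ) '' S).Nonempty := ⟨q₀, ⟨q₀, hq₀, rfl⟩⟩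
      set c := sSup (((↑) : ℚ → ℝ) '' S) with hc
      have hlow : ∀ q : ℚ, (q : ℝ) < c → q ∈ S := by
        intro q hq
        obtain ⟨x, hx, hqx⟩ := exists_lt_of_lt_csSup hne hq
        obtain ⟨s, hsS, rfl⟩ := hx
        exact Sdc q s (by exact_mod_cast hqx.le) hsS
      have hhigh : ∀ q' : ℚ, c < (q' : ℝ) → ℙ {ω | (q' : ℝ) ≤ F ω} = 0 := by
        intro q' hq'
        obtain ⟨q, hq1, hq2⟩ := exists_rat_btwn hq'
        have hqnS : q ∉ S := fun hqS => absurd (le_csSup hbdd ⟨q, hqS, rfl⟩) (not_le.mpr hq1)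
        rcases H q q' (by exact_mod_cast hq2) with h0 | h0
        · exact absurd h0 hqnS
        · exact h0
      apply h
      refine ⟨c, ?_⟩
      rw [Filter.EventuallyEq, ae_iff]
      have hsub : {ω | ¬ F ω = c} ⊆
          (⋃ q : {q : ℚ // (q : ℝ) < c}, {ω | F ω ≤ ((q : ℚ) : ℝ)}) ∪
          (⋃ q : {q : ℚ // c < (q : ℝ)}, {ω | ((q : ℚ) : ℝ) ≤ F ω}) := by
        intro ω hω
        rcases lt_or_gt_of_ne hω with hlt | hgt
        · obtain ⟨q, h1, h2⟩ := exists_rat_btwn hlt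
          exact Or.inl (Set.mem_iUnion.mpr ⟨⟨q, h2⟩, h1.le⟩)
        · obtain ⟨q, h1, h2⟩ := exists_rat_btwn hgt
          exact Or.inr (Set.mem_iUnion.mpr ⟨⟨q, h1⟩, h2.le⟩)
      exact measure_mono_null hsub (measure_union_null
        (measure_iUnion_null fun q => hlow q.1 q.2)
        (measure_iUnion_null fun q => hhigh q.1 q.2))
    · push_neg at hScne
      have huniv : (Set.univ : Set Ω) ⊆ ⋃ q : ℚ, {ω | F ω ≤ (q : ℝ)} := by
        intro ω _
        obtain ⟨q, hq⟩ := exists_rat_gt (F ω)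
        exact Set.mem_iUnion.mpr ⟨q, hq.le⟩
      have : ℙ (Set.univ : Set Ω) = 0 :=
        measure_mono_null huniv (measure_iUnion_null fun q => hScne q)
      simp at this
  · have hall : ∀ q' : ℚ, ℙ {ω | ((q' : ℚ) : ℝ) ≤ F ω} = 0 := by
      intro q'
      rcases H ((q' : ℝ) - 1) q' (by linarith) with h0 | h0
      · exfalso
        apply hSne
        refine ⟨q' - 1, ?_⟩
        have : ℙ {ω | F ω ≤ ((q' - 1 : ℚ) : ℝ)} = 0 := by
          have : ((q' - 1 : ℚ) : ℝ) = (q' : ℝ) - 1 := by push_cast; ring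
          rw [this]; exact h0
        exact this
      · exact h0
    have huniv : (Set.univ : Set Ω) ⊆ ⋃ q : ℚ, {ω | (q : ℝ) ≤ F ω} := by
      intro ω _
      obtain ⟨q, hq⟩ := exists_rat_lt (F ω)
      exact Set.mem_iUnion.mpr ⟨q, hq.le⟩
    have : ℙ (Set.univ : Set Ω) = 0 :=
      measure_mono_null huniv (measure_iUnion_null fun q => hall q)
    simp at this

private lemma exists_trunc_pos {Ω : Type*} [MeasureSpace Ω]
    (ξ : Ω → ℂ) (S : Set Ω) (hS : ℙ S ≠ 0) :
    ∃ n : ℕ, ℙ (S ∩ {ω | ‖ξ ω‖ ≤ (n : ℝ)}) ≠ 0 := by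
  by_contra hc
  push_neg at hc
  apply hS
  have hsub : S ⊆ ⋃ n : ℕ, S ∩ {ω | ‖ξ ω‖ ≤ (n : ℝ)} := by
    intro ω hω
    obtain ⟨n, hn⟩ := exists_nat_ge ‖ξ ω‖
    exact Set.mem_iUnion.mpr ⟨n, hω, hn⟩
  exact measure_mono_null hsub (measure_iUnion_null hc)

private lemma nonconst_on_trunc {Ω : Type*} [MeasureSpace Ω] [IsProbabilityMeasure (ℙ : Measure Ω)]
    (ξ : Ω → ℂ) (hmeas : Measurable ξ) (F : Ω → ℝ) (hFm : Measurable F)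
    (h : ¬ ∃ c : ℝ, F =ᵐ[ℙ] fun _ => c) :
    ∃ n : ℕ, ¬ ∃ t : ℝ, F =ᵐ[Measure.restrict ℙ {ω | ‖ξ ω‖ ≤ (n : ℝ)}] fun _ => t := by
  obtain ⟨q, q', hqq', hq, hq'⟩ := exists_two_sided F h
  obtain ⟨n₁, hn₁⟩ := exists_trunc_pos ξ _ hq
  obtain ⟨n₂, hn₂⟩ := exists_trunc_pos ξ _ hq'
  refine ⟨max n₁ n₂, ?_⟩
  rintro ⟨t, ht⟩
  set E := {ω | ‖ξ ω‖ ≤ ((max n₁ n₂ : ℕ) : ℝ)} with hE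
  have hEm : MeasurableSet E := measurableSet_le hmeas.norm measurable_const
  have key : ∀ (S : Set Ω), MeasurableSet S → ℙ (S ∩ E) ≠ 0 → ∃ ω, ω ∈ S ∩ E ∧ F ω = t := by
    intro S hSm hSne
    by_contra hno
    push_neg at hno
    apply hSne
    have hnull : (Measure.restrict ℙ E) {ω | ¬ F ω = t} = 0 := by
      rw [Filter.EventuallyEq, ae_iff] at ht; exact ht
    have hsub : S ∩ E ⊆ {ω | ¬ F ω = t} := fun ω hω => hno ω hω
    have h0 : (Measure.restrict ℙ E) (S ∩ E) = 0 := measure_mono_null hsub hnull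
    rwa [Measure.restrict_apply (hSm.inter hEm), Set.inter_assoc, Set.inter_self] at h0
  have hcast : ∀ m : ℕ, m ≤ max n₁ n₂ → {ω | ‖ξ ω‖ ≤ (m : ℝ)} ⊆ E := by
    intro m hm ω hω
    simp only [Set.mem_setOf_eq, hE] at hω ⊢
    refine le_trans hω ?_
    exact_mod_cast hm
  obtain ⟨ω₁, hω₁, hF₁⟩ := key {ω | F ω ≤ q} (measurableSet_le hFm measurable_const)
    (fun h0 => hn₁ (measure_mono_null
      (Set.inter_subset_inter_right _ (hcast n₁ (Nat.le_max_left _ _))) h0))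
  obtain ⟨ω₂, hω₂, hF₂⟩ := key {ω | q' ≤ F ω} (measurableSet_le measurable_const hFm)
    (fun h0 => hn₂ (measure_mono_null
      (Set.inter_subset_inter_right _ (hcast n₂ (Nat.le_max_right _ _))) h0))
  have h1 : F ω₁ ≤ q := hω₁.1
  have h2 : q' ≤ F ω₂ := hω₂.1
  rw [hF₁] at h1
  rw [hF₂] at h2
  linarith

private lemma key_nondeg {Ω : Type*} [MeasureSpace Ω] [IsProbabilityMeasure (ℙ : Measure Ω)]
    (ξ : Ω → ℂ) (hmeas : Measurable ξ)
    (hnc : ¬ ∃ c : ℂ, ξ =ᵐ[ℙ] fun _ => c) :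
    ∃ (θ : ℝ) (n : ℕ), ¬ ∃ y c : ℝ,
      (fun ω => (Complex.exp (θ * Complex.I) * ξ ω).re)
        =ᵐ[Measure.restrict ℙ {ω | ‖ξ ω‖ ≤ (n : ℝ)}]
      fun ω => y * (Complex.exp (θ * Complex.I) * ξ ω).im + c := by
  have hξν : ∃ n₀ : ℕ, ¬ ∃ c₀ : ℂ, ξ =ᵐ[Measure.restrict ℙ {ω | ‖ξ ω‖ ≤ (n₀ : ℝ)}] fun _ => c₀ := by
    by_cases hre : ∃ cR : ℝ, (fun ω => (ξ ω).re) =ᵐ[ℙ] fun _ => cR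
    · have him : ¬ ∃ cI : ℝ, (fun ω => (ξ ω).im) =ᵐ[ℙ] fun _ => cI := by
        rintro ⟨cI, hcI⟩
        obtain ⟨cR, hcR⟩ := hre
        apply hnc
        refine ⟨⟨cR, cI⟩, ?_⟩
        filter_upwards [hcR, hcI] with ω h1 h2
        exact Complex.ext h1 h2
      obtain ⟨n₀, hn₀⟩ := nonconst_on_trunc ξ hmeas _ (Complex.measurable_im.comp hmeas) him
      refine ⟨n₀, ?_⟩
      rintro ⟨c₀, hc₀⟩
      exact hn₀ ⟨c₀.im, by filter_upwards [hc₀] with ω h; simp [Function.comp, h]⟩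
    · obtain ⟨n₀, hn₀⟩ := nonconst_on_trunc ξ hmeas _ (Complex.measurable_re.comp hmeas) hre
      refine ⟨n₀, ?_⟩
      rintro ⟨c₀, hc₀⟩
      exact hn₀ ⟨c₀.re, by filter_upwards [hc₀] with ω h; simp [Function.comp, h]⟩
  obtain ⟨n₀, hξν⟩ := hξν
  set ν := Measure.restrict ℙ {ω | ‖ξ ω‖ ≤ (n₀ : ℝ)} with hν
  by_cases hline : ∃ (u : ℂ) (c : ℝ), u ≠ 0 ∧ (fun ω => (u * ξ ω).re) =ᵐ[ν] fun _ => c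
  · obtain ⟨u, c, hu, hrel⟩ := hline
    refine ⟨Complex.arg u + Real.pi / 2, n₀, ?_⟩
    rintro ⟨y, c', hyc⟩
    set φ := Complex.arg u with hφ
    have hexp : Complex.exp (↑(φ + Real.pi/2) * Complex.I)
        = Complex.I * Complex.exp (↑φ * Complex.I) := by
      push_cast
      rw [add_mul, Complex.exp_add, Complex.exp_mul_I, Complex.exp_mul_I,
        Complex.cos_pi_div_two, Complex.sin_pi_div_two]
      ring
    set r := ‖u‖ with hr
    have hrpos : 0 < r := norm_pos_iff.mpr hu
    have hu' : (r : ℂ) * Complex.exp (↑φ * Complex.I) = u := Complex.norm_mul_exp_arg_mul_I u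
    have hB : (fun ω => (Complex.exp (↑(φ + Real.pi/2) * Complex.I) * ξ ω).im)
        =ᵐ[ν] fun _ => c / r := by
      filter_upwards [hrel] with ω hω
      have h1 : (u * ξ ω).re = r * (Complex.exp (↑φ * Complex.I) * ξ ω).re := by
        rw [← hu', mul_assoc, Complex.re_ofReal_mul]
      have h3 : r * (Complex.exp (↑φ * Complex.I) * ξ ω).re = c := by rw [← h1]; exact hω
      rw [hexp, mul_assoc, Complex.mul_im]
      simp only [Complex.I_re, Complex.I_im, zero_mul, one_mul, zero_add]
      rw [eq_div_iff (ne_of_gt hrpos)]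
      linarith
    have hA : (fun ω => (Complex.exp (↑(φ + Real.pi/2) * Complex.I) * ξ ω).re)
        =ᵐ[ν] fun _ => y * (c/r) + c' := by
      filter_upwards [hyc, hB] with ω h1 h2
      rw [h1, h2]
    apply hξν
    refine ⟨Complex.exp (-(↑(φ + Real.pi/2) * Complex.I)) *
      (((y * (c/r) + c' : ℝ) : ℂ) + ((c/r : ℝ) : ℂ) * Complex.I), ?_⟩
    filter_upwards [hA, hB] with ω h1 h2
    have hαω : Complex.exp (↑(φ + Real.pi/2) * Complex.I) * ξ ω
        = ((y * (c/r) + c' : ℝ) : ℂ) + ((c/r : ℝ) : ℂ) * Complex.I := by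
      apply Complex.ext
      · rw [h1]; simp
      · rw [h2]; simp
    have hstep : ξ ω = Complex.exp (-(↑(φ + Real.pi/2) * Complex.I)) *
        (Complex.exp (↑(φ + Real.pi/2) * Complex.I) * ξ ω) := by
      rw [← mul_assoc, ← Complex.exp_add]
      simp
    rw [hstep, hαω]
  · refine ⟨0, n₀, ?_⟩
    rintro ⟨y, c, hyc⟩
    apply hline
    refine ⟨1 + (y : ℂ) * Complex.I, c, ?_, ?_⟩
    · intro h0
      have := congrArg Complex.re h0
      simp at this
    · filter_upwards [hyc] with ω hω
      simp only [Complex.ofReal_zero, zero_mul, Complex.exp_zero, one_mul] at hω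
      simp only [add_mul, one_mul, Complex.add_re, Complex.mul_re, Complex.mul_im,
        Complex.I_re, Complex.I_im, Complex.ofReal_re, Complex.ofReal_im,
        Complex.one_re, Complex.one_im, Complex.add_im]
      rw [hω]
      ring

/-- Any complex random variable with finite nonzero variance can be rotated by a
phase `e^{iθ}` so as to have `κ`-controlled second moment for some `κ ≥ 1`. -/
theorem stmt5 {Ω : Type*} [MeasureSpace Ω] [IsProbabilityMeasure (ℙ : Measure Ω)]
    (ξ : Ω → ℂ) (hmeas : Measurable ξ) (hL2 : MemLp ξ 2 ℙ)
    (hvar : (∫ ω, ‖ξ ω - ∫ ω', ξ ω'‖ ^ 2) ≠ 0) :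
    ∃ θ κ : ℝ, 1 ≤ κ ∧
      (∫ ω, ‖Complex.exp (θ * Complex.I) * ξ ω‖ ^ 2) ≤ κ ∧
      ∀ z w : ℂ, (1 / κ) * z.re ^ 2 ≤
        ∫ ω in {ω | ‖ξ ω‖ ≤ κ},
          ((z * (Complex.exp (θ * Complex.I) * ξ ω) - w).re) ^ 2 := by
  have hnc : ¬ ∃ c : ℂ, ξ =ᵐ[ℙ] fun _ => c := by
    rintro ⟨c, hc⟩
    apply hvar
    have hm : (∫ ω', ξ ω') = c := by
      rw [integral_congr_ae hc]
      simp
    rw [hm]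
    have h0 : (fun ω => ‖ξ ω - c‖ ^ 2) =ᵐ[ℙ] fun _ => (0 : ℝ) := by
      filter_upwards [hc] with ω hω; rw [hω]; simp
    rw [integral_congr_ae h0, integral_const]; simp
  obtain ⟨θ, n₀, hkey⟩ := key_nondeg ξ hmeas hnc
  set u : ℂ := Complex.exp (θ * Complex.I) with hu
  have hu1 : ∀ z : ℂ, ‖u * z‖ = ‖z‖ := by
    intro z
    rw [norm_mul, hu]
    simp [Complex.norm_exp_ofReal_mul_I]
  set ν := Measure.restrict ℙ {ω | ‖ξ ω‖ ≤ (n₀ : ℝ)} with hν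
  have hα : MemLp (fun ω => u * ξ ω) 2 ℙ := hL2.const_mul u
  have hA : MemLp (fun ω => (u * ξ ω).re) 2 ℙ := by simpa using hα.re
  have hB : MemLp (fun ω => (u * ξ ω).im) 2 ℙ := by simpa using hα.im
  have hAν : MemLp (fun ω => (u * ξ ω).re) 2 ν := hA.restrict _
  have hBν : MemLp (fun ω => (u * ξ ω).im) 2 ν := hB.restrict _
  have h1ν : MemLp (fun _ : Ω => (1 : ℝ)) 2 ν := memLp_const 1
  set fA := hAν.toLp _ with hfA
  set fB := hBν.toLp _ with hfB
  set f1 := h1ν.toLp _ with hf1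
  set K : Submodule ℝ (Lp ℝ 2 ν) := Submodule.span ℝ {fB, f1} with hK
  have hKfin : FiniteDimensional ℝ K := FiniteDimensional.span_of_finite ℝ (Set.toFinite _)
  have hKclosed : IsClosed (K : Set (Lp ℝ 2 ν)) := Submodule.closed_of_finiteDimensional K
  have hAnotin : fA ∉ K := by
    intro hmem
    rw [hK, Submodule.mem_span_pair] at hmem
    obtain ⟨a, b, hab⟩ := hmem
    apply hkey
    refine ⟨a, b, ?_⟩
    have h2 : ⇑fA =ᵐ[ν] fun ω => (u * ξ ω).re := hAν.coeFn_toLp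
    have h1 : ⇑(a • fB + b • f1) =ᵐ[ν] fun ω => a * (u * ξ ω).im + b := by
      filter_upwards [Lp.coeFn_add (a • fB) (b • f1), Lp.coeFn_smul a fB,
        Lp.coeFn_smul b f1, hBν.coeFn_toLp, h1ν.coeFn_toLp] with ω e1 e2 e3 e4 e5
      rw [e1]
      simp only [Pi.add_apply]
      rw [e2, e3]
      simp only [Pi.smul_apply, smul_eq_mul]
      rw [e4, e5]
      ring
    rw [← hab] at h2
    exact h2.symm.trans h1
  have hKne : (K : Set (Lp ℝ 2 ν)).Nonempty := ⟨0, K.zero_mem⟩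
  set δ := Metric.infDist fA (K : Set (Lp ℝ 2 ν)) with hδ
  have hδpos : 0 < δ := by
    rcases lt_or_eq_of_le (Metric.infDist_nonneg (s := (K : Set (Lp ℝ 2 ν))) (x := fA)) with h | h
    · exact h
    · exfalso
      apply hAnotin
      have hcl : fA ∈ closure (K : Set (Lp ℝ 2 ν)) :=
        (Metric.mem_closure_iff_infDist_zero hKne).mpr h.symm
      rwa [hKclosed.closure_eq] at hcl
  have hcore : ∀ y c : ℝ, δ ^ 2 ≤ ∫ ω, ((u * ξ ω).re - (y * (u * ξ ω).im + c)) ^ 2 ∂ν := by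
    intro y c
    set g := fA - (y • fB + c • f1) with hg
    have hgK : (y • fB + c • f1) ∈ K :=
      K.add_mem (K.smul_mem _ (Submodule.subset_span (Set.mem_insert _ _)))
        (K.smul_mem _ (Submodule.subset_span (Set.mem_insert_of_mem _ rfl)))
    have hd : δ ≤ ‖g‖ := by
      have h := Metric.infDist_le_dist_of_mem (x := fA) hgK
      rwa [dist_eq_norm] at h
    have hgae : ⇑g =ᵐ[ν] fun ω => (u * ξ ω).re - (y * (u * ξ ω).im + c) := by
      filter_upwards [Lp.coeFn_sub fA (y • fB + c • f1), Lp.coeFn_add (y • fB) (c • f1),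
        Lp.coeFn_smul y fB, Lp.coeFn_smul c f1, hAν.coeFn_toLp, hBν.coeFn_toLp,
        h1ν.coeFn_toLp] with ω e1 e2 e3 e4 e5 e6 e7
      rw [e1]
      simp only [Pi.sub_apply]
      rw [e5, e2]
      simp only [Pi.add_apply]
      rw [e3, e4]
      simp only [Pi.smul_apply, smul_eq_mul]
      rw [e6, e7]
      ring
    have hnorm : ‖g‖ ^ 2 = ∫ ω, ((u * ξ ω).re - (y * (u * ξ ω).im + c)) ^ 2 ∂ν := by
      rw [← real_inner_self_eq_norm_sq, L2.inner_def]
      refine integral_congr_ae ?_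
      filter_upwards [hgae] with ω hω
      rw [hω]
      rw [real_inner_self_eq_norm_sq]
      simp [Real.norm_eq_abs, _root_.sq_abs]
    calc δ ^ 2 ≤ ‖g‖ ^ 2 := by nlinarith [norm_nonneg g]
    _ = _ := hnorm
  set M := ∫ ω, ‖ξ ω‖ ^ 2 with hM
  have hM0 : (0 : ℝ) ≤ M := integral_nonneg fun ω => by positivity
  set κ := max (max 1 (1 / δ ^ 2)) (max (n₀ : ℝ) M) with hκ
  have hκ1 : (1 : ℝ) ≤ κ := le_trans (le_max_left 1 _) (le_max_left _ _)
  have hκ0 : (0 : ℝ) < κ := lt_of_lt_of_le one_pos hκ1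
  refine ⟨θ, κ, hκ1, ?_, ?_⟩
  · have heq : (fun ω => ‖Complex.exp (↑θ * Complex.I) * ξ ω‖ ^ 2) = fun ω => ‖ξ ω‖ ^ 2 := by
      funext ω
      rw [hu1]
    rw [heq]
    exact le_trans (le_max_right (n₀ : ℝ) M) (le_max_right _ _)
  · intro z w
    have hre : ∀ ω : Ω, (z * (u * ξ ω) - w).re
        = z.re * (u * ξ ω).re - z.im * (u * ξ ω).im - w.re := by
      intro ω
      simp [Complex.sub_re, Complex.mul_re]
    by_cases hz : z.re = 0
    · rw [hz]
      simp only [ne_eq, OfNat.ofNat_ne_zero, not_false_eq_true, zero_pow, mul_zero]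
      exact setIntegral_nonneg (measurableSet_le hmeas.norm measurable_const)
        fun ω _ => sq_nonneg _
    · simp only [← hu, hre]
      have hcomb : MemLp (fun ω => z.re * (u * ξ ω).re - z.im * (u * ξ ω).im - w.re) 2 ℙ :=
        ((hA.const_mul _).sub (hB.const_mul _)).sub (memLp_const _)
      have hint : Integrable
          (fun ω => (z.re * (u * ξ ω).re - z.im * (u * ξ ω).im - w.re) ^ 2) ℙ :=
        hcomb.integrable_sq
      have hsub : {ω | ‖ξ ω‖ ≤ (n₀ : ℝ)} ⊆ {ω | ‖ξ ω‖ ≤ κ} := by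
        intro ω hω
        simp only [Set.mem_setOf_eq] at hω ⊢
        exact le_trans hω (le_trans (le_max_left _ _) (le_max_right _ _))
      have hmono : (∫ ω in {ω | ‖ξ ω‖ ≤ (n₀ : ℝ)},
            (z.re * (u * ξ ω).re - z.im * (u * ξ ω).im - w.re) ^ 2)
          ≤ ∫ ω in {ω | ‖ξ ω‖ ≤ κ},
            (z.re * (u * ξ ω).re - z.im * (u * ξ ω).im - w.re) ^ 2 :=
        setIntegral_mono_set hint.integrableOn
          (Filter.Eventually.of_forall fun ω => sq_nonneg _)
          (HasSubset.Subset.eventuallyLE hsub)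
      have hlow : z.re ^ 2 * δ ^ 2 ≤ ∫ ω in {ω | ‖ξ ω‖ ≤ (n₀ : ℝ)},
          (z.re * (u * ξ ω).re - z.im * (u * ξ ω).im - w.re) ^ 2 := by
        have h1 := hcore (z.im / z.re) (w.re / z.re)
        have h2 : (∫ ω, (z.re * (u * ξ ω).re - z.im * (u * ξ ω).im - w.re) ^ 2 ∂ν)
            = z.re ^ 2 * ∫ ω, ((u * ξ ω).re
              - (z.im / z.re * (u * ξ ω).im + w.re / z.re)) ^ 2 ∂ν := by
          rw [← integral_const_mul]
          refine integral_congr_ae (Filter.Eventually.of_forall fun ω => ?_)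
          field_simp
          ring
        calc z.re ^ 2 * δ ^ 2
            ≤ z.re ^ 2 * ∫ ω, ((u * ξ ω).re
              - (z.im / z.re * (u * ξ ω).im + w.re / z.re)) ^ 2 ∂ν :=
              mul_le_mul_of_nonneg_left h1 (sq_nonneg _)
        _ = _ := h2.symm
      have hκδ : 1 / κ ≤ δ ^ 2 := by
        have h3 : 1 / δ ^ 2 ≤ κ := le_trans (le_max_right 1 _) (le_max_left _ _)
        have hδ2 : (0 : ℝ) < 1 / δ ^ 2 := by positivity
        have h4 : 1 / κ ≤ 1 / (1 / δ ^ 2) := one_div_le_one_div_of_le hδ2 h3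
        rwa [one_div_one_div] at h4
      calc (1 / κ) * z.re ^ 2 ≤ δ ^ 2 * z.re ^ 2 :=
            mul_le_mul_of_nonneg_right hκδ (sq_nonneg _)
      _ = z.re ^ 2 * δ ^ 2 := by ring
      _ ≤ _ := le_trans hlow hmono
end

section
/- (Anti-concentration for κ-controlled sums) Let κ ≥ 1 and let ξ_1,...,ξ_n be independent complex random variables each with κ-controlled second moment. Then there is a constant c > 0 depending only on κ such that for every z ∈ ℂ and every unit vector (v_1,...,v_n) ∈ ℂ^n, P(|ξ_1 v_1 + ... + ξ_n v_n − z| ≤ c) ≤ 1 − c. -/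
open MeasureTheory ProbabilityTheory Complex

/-- A complex random variable `ξ` has `κ`-controlled second moment if `E|ξ|² ≤ κ`
and `E[Re(zξ − w)² · 1_{|ξ| ≤ κ}] ≥ Re(z)²/κ` for all complex `z, w`. -/
def Controlled {Ω : Type*} [MeasureSpace Ω] (κ : ℝ) (ξ : Ω → ℂ) : Prop :=
  ((∫ ω, ‖ξ ω‖ ^ 2) ≤ κ) ∧
  ∀ z w : ℂ, (1 / κ) * z.re ^ 2 ≤ ∫ ω in {ω | ‖ξ ω‖ ≤ κ}, ((z * ξ ω - w).re) ^ 2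

section helpers
variable {α : Type*} [MeasurableSpace α] (μ : Measure α) [IsFiniteMeasure μ]

lemma bddInt_real {f : α → ℝ} (hf : Measurable f) (M : ℝ) (h : ∀ x, |f x| ≤ M) :
    Integrable f μ :=
  (integrable_const M).mono' hf.aestronglyMeasurable (ae_of_all _ (by simpa using h))

lemma bddInt_cx {f : α → ℂ} (hf : Measurable f) (M : ℝ) (h : ∀ x, ‖f x‖ ≤ M) :
    Integrable f μ :=
  (integrable_const M).mono' hf.aestronglyMeasurable (ae_of_all _ h)

end helpers

lemma cos_lb {x : ℝ} (h : |x| ≤ 1) : 1 - x ^ 2 ≤ Real.cos x := by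
  have hb := Real.cos_bound h
  have h2 : x ^ 2 ≤ 1 := by nlinarith [abs_nonneg x, _root_.sq_abs x]
  have h4 : |x| ^ 4 ≤ x ^ 2 := by nlinarith [abs_nonneg x, _root_.sq_abs x]
  have := abs_le.1 hb
  nlinarith

lemma cos_ub {x : ℝ} (h : |x| ≤ 1) : Real.cos x ≤ 1 - (1 / 4) * x ^ 2 := by
  have hb := Real.cos_bound h
  have h2 : x ^ 2 ≤ 1 := by nlinarith [abs_nonneg x, _root_.sq_abs x]
  have h4 : |x| ^ 4 ≤ x ^ 2 := by nlinarith [abs_nonneg x, _root_.sq_abs x]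
  have := abs_le.1 hb
  nlinarith

lemma exp_neg_ub {x : ℝ} (h0 : 0 ≤ x) (h1 : x ≤ 1) : Real.exp (-x) ≤ 1 - x / 2 := by
  have h2 : 1 + x ≤ Real.exp x := by linarith [Real.add_one_le_exp x]
  have h3 : Real.exp (-x) = (Real.exp x)⁻¹ := Real.exp_neg x
  have h4 : (Real.exp x)⁻¹ ≤ (1 + x)⁻¹ := by
    apply inv_anti₀ (by linarith) h2
  have h5 : (1 + x)⁻¹ ≤ 1 - x / 2 := by
    rw [inv_le_iff_one_le_mul₀ (by linarith)]
    nlinarith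
  linarith

lemma exp_decomp {α : Type*} [MeasurableSpace α] (μ : Measure α) [IsFiniteMeasure μ]
    (g : α → ℝ) (hg : Measurable g) :
    ∫ ω, Complex.exp ((g ω : ℂ) * I) ∂μ
      = ((∫ ω, Real.cos (g ω) ∂μ : ℝ) : ℂ) + ((∫ ω, Real.sin (g ω) ∂μ : ℝ) : ℂ) * I := by
  have h1 : ∀ ω, Complex.exp ((g ω : ℂ) * I)
      = ((Real.cos (g ω) : ℝ) : ℂ) + ((Real.sin (g ω) : ℝ) : ℂ) * I := fun ω => by
    rw [Complex.exp_mul_I, Complex.ofReal_cos, Complex.ofReal_sin]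
  have hic : Integrable (fun ω => ((Real.cos (g ω) : ℝ) : ℂ)) μ :=
    ((bddInt_real μ hg.cos 1 fun x => Real.abs_cos_le_one _).ofReal)
  have his : Integrable (fun ω => ((Real.sin (g ω) : ℝ) : ℂ) * I) μ :=
    ((bddInt_real μ hg.sin 1 fun x => Real.abs_sin_le_one _).ofReal).mul_const I
  calc ∫ ω, Complex.exp ((g ω : ℂ) * I) ∂μ
      = ∫ ω, (((Real.cos (g ω) : ℝ) : ℂ) + ((Real.sin (g ω) : ℝ) : ℂ) * I) ∂μ := by
        simp_rw [h1]
    _ = (∫ ω, ((Real.cos (g ω) : ℝ) : ℂ) ∂μ) + (∫ ω, ((Real.sin (g ω) : ℝ) : ℂ) * I ∂μ) :=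
        integral_add hic his
    _ = ((∫ ω, Real.cos (g ω) ∂μ : ℝ) : ℂ) + ((∫ ω, Real.sin (g ω) ∂μ : ℝ) : ℂ) * I := by
        rw [integral_mul_const]
        congr 1
        · exact integral_ofReal
        · exact congrArg (· * I) integral_ofReal

lemma integral_mul_cx {α : Type*} {mα : MeasurableSpace α} {μ : Measure α}
    {P Q : α → ℂ} (h : IndepFun P Q μ) (hP : Integrable P μ) (hQ : Integrable Q μ) :
    ∫ ω, P ω * Q ω ∂μ = (∫ ω, P ω ∂μ) * ∫ ω, Q ω ∂μ := by
  have mre := Complex.measurable_re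
  have mim := Complex.measurable_im
  have hPQ : Integrable (fun ω => P ω * Q ω) μ := by
    have := h.integrable_mul hP hQ
    exact this
  have e11 : ∫ ω, (P ω).re * (Q ω).re ∂μ = (∫ ω, (P ω).re ∂μ) * ∫ ω, (Q ω).re ∂μ :=
    (h.comp mre mre).integral_mul_eq_mul_integral hP.re.aestronglyMeasurable hQ.re.aestronglyMeasurable
  have e12 : ∫ ω, (P ω).re * (Q ω).im ∂μ = (∫ ω, (P ω).re ∂μ) * ∫ ω, (Q ω).im ∂μ :=
    (h.comp mre mim).integral_mul_eq_mul_integral hP.re.aestronglyMeasurable hQ.im.aestronglyMeasurable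
  have e21 : ∫ ω, (P ω).im * (Q ω).re ∂μ = (∫ ω, (P ω).im ∂μ) * ∫ ω, (Q ω).re ∂μ :=
    (h.comp mim mre).integral_mul_eq_mul_integral hP.im.aestronglyMeasurable hQ.re.aestronglyMeasurable
  have e22 : ∫ ω, (P ω).im * (Q ω).im ∂μ = (∫ ω, (P ω).im ∂μ) * ∫ ω, (Q ω).im ∂μ :=
    (h.comp mim mim).integral_mul_eq_mul_integral hP.im.aestronglyMeasurable hQ.im.aestronglyMeasurable
  have i11 : Integrable (fun ω => (P ω).re * (Q ω).re) μ := by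
    have := (h.comp mre mre).integrable_mul hP.re hQ.re
    exact this
  have i12 : Integrable (fun ω => (P ω).re * (Q ω).im) μ := by
    have := (h.comp mre mim).integrable_mul hP.re hQ.im
    exact this
  have i21 : Integrable (fun ω => (P ω).im * (Q ω).re) μ := by
    have := (h.comp mim mre).integrable_mul hP.im hQ.re
    exact this
  have i22 : Integrable (fun ω => (P ω).im * (Q ω).im) μ := by
    have := (h.comp mim mim).integrable_mul hP.im hQ.im
    exact this
  have hre : ∀ {F : α → ℂ}, Integrable F μ → ∫ ω, (F ω).re ∂μ = (∫ ω, F ω ∂μ).re := by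
    intro F hF
    simpa using integral_re (μ := μ) hF
  have him : ∀ {F : α → ℂ}, Integrable F μ → ∫ ω, (F ω).im ∂μ = (∫ ω, F ω ∂μ).im := by
    intro F hF
    simpa using integral_im (μ := μ) hF
  apply Complex.ext
  · rw [← hre hPQ, Complex.mul_re, ← hre hP, ← hre hQ, ← him hP, ← him hQ,
      ← e11, ← e22]
    simp_rw [Complex.mul_re]
    exact integral_sub i11 i22
  · rw [← him hPQ, Complex.mul_im, ← hre hP, ← hre hQ, ← him hP, ← him hQ,
      ← e12, ← e21]
    simp_rw [Complex.mul_im]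
    exact integral_add i12 i21

lemma iIndep_integral_prod_cx {Ω : Type} [MeasureSpace Ω] [IsProbabilityMeasure (ℙ : Measure Ω)]
    {n : ℕ} (f : Fin n → Ω → ℂ) (hmeas : ∀ j, Measurable (f j))
    (hind : iIndepFun f ℙ)
    (hint : ∀ j, Integrable (f j) ℙ) (s : Finset (Fin n)) :
    Integrable (∏ j ∈ s, f j) ℙ ∧ (∫ ω, ∏ j ∈ s, f j ω) = ∏ j ∈ s, ∫ ω, f j ω := by
  classical
  induction s using Finset.cons_induction with
  | empty =>
    constructor
    · exact integrable_const (1 : ℂ)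
    · simp
  | cons i s hi ih =>
    have hPQ : IndepFun (∏ j ∈ s, f j) (f i) ℙ :=
      hind.indepFun_finsetProd_of_notMem hmeas hi
    have hint2 : Integrable ((∏ j ∈ s, f j) * f i) ℙ := hPQ.integrable_mul ih.1 (hint i)
    constructor
    · rw [Finset.prod_cons]
      have : f i * ∏ j ∈ s, f j = (∏ j ∈ s, f j) * f i := mul_comm _ _
      rw [this]
      exact hint2
    · have e1 : ∫ ω, (f i * ∏ j ∈ s, f j) ω = ∫ ω, (∏ j ∈ s, f j) ω * f i ω := by
        congr 1
        ext ω
        simp [mul_comm]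
      have e2 : ∫ ω, (∏ j ∈ s, f j) ω * f i ω = (∫ ω, (∏ j ∈ s, f j) ω) * ∫ ω, f i ω :=
        integral_mul_cx hPQ ih.1 (hint i)
      have e3 : ∀ ω, (f i * ∏ j ∈ s, f j) ω = f i ω * ∏ j ∈ s, f j ω := by
        intro ω; simp
      calc ∫ ω, ∏ j ∈ Finset.cons i s hi, f j ω
          = ∫ ω, (f i * ∏ j ∈ s, f j) ω := by
            congr 1; ext ω; rw [e3]; simp [Finset.prod_apply, Finset.prod_cons, Finset.prod_insert hi]
        _ = (∫ ω, (∏ j ∈ s, f j) ω) * ∫ ω, f i ω := by rw [e1, e2]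
        _ = (∫ ω, ∏ j ∈ s, f j ω) * ∫ ω, f i ω := by
            simp_rw [Finset.prod_apply]
        _ = (∏ j ∈ s, ∫ ω, f j ω) * ∫ ω, f i ω := by rw [ih.2]
        _ = ∏ j ∈ Finset.cons i s hi, ∫ ω, f j ω := by
            rw [Finset.prod_cons, mul_comm]

lemma re_sq_le {w : ℂ} {κ : ℝ} (h : ‖w‖ ≤ κ) : w.re ^ 2 ≤ κ ^ 2 := by
  have h1 : |w.re| ≤ κ := le_trans (Complex.abs_re_le_norm w) h
  nlinarith [abs_nonneg w.re, _root_.sq_abs w.re]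

lemma coord_bound {Ω : Type} [MeasureSpace Ω] [IsProbabilityMeasure (ℙ : Measure Ω)]
    (κ : ℝ) (hκ : 1 ≤ κ) (t : ℝ) (ht : t = 1 / (2 * κ)) (ξ : Ω → ℂ) (hm : Measurable ξ)
    (hc : ∀ z w : ℂ, (1 / κ) * z.re ^ 2 ≤ ∫ ω in {ω | ‖ξ ω‖ ≤ κ}, ((z * ξ ω - w).re) ^ 2)
    (a : ℂ) (ha : ‖a‖ ≤ 1) :
    ‖∫ ω, Complex.exp (((t * (a * ξ ω).re : ℝ) : ℂ) * I)‖ ≤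
      Real.exp (-(t ^ 2 * a.re ^ 2 / (8 * κ ^ 4))) := by
  have hκ0 : (0 : ℝ) < κ := lt_of_lt_of_le one_pos hκ
  have ht0 : 0 < t := by rw [ht]; positivity
  have htκ : t * (2 * κ) = 1 := by rw [ht]; field_simp
  set X : Ω → ℝ := fun ω => t * (a * ξ ω).re with hX
  have hXm : Measurable X := (Complex.measurable_re.comp (hm.const_mul a)).const_mul t
  set A : Set Ω := {ω | ‖ξ ω‖ ≤ κ} with hAdef
  have hA : MeasurableSet A := measurableSet_le hm.norm measurable_const
  -- bound for X on A
  have hXb : ∀ ω ∈ A, |X ω| ≤ 1 / 2 := by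
    intro ω hω
    have h1 : |(a * ξ ω).re| ≤ ‖a * ξ ω‖ := Complex.abs_re_le_norm _
    have h2 : ‖a * ξ ω‖ = ‖a‖ * ‖ξ ω‖ := norm_mul _ _
    have h3 : ‖ξ ω‖ ≤ κ := hω
    have h4 : |X ω| = t * |(a * ξ ω).re| := by
      rw [hX, abs_mul, abs_of_pos ht0]
    have h5 : ‖a‖ * ‖ξ ω‖ ≤ κ := by
      nlinarith [norm_nonneg a, norm_nonneg (ξ ω)]
    have h6 : |X ω| ≤ t * κ := by
      rw [h4]
      apply mul_le_mul_of_nonneg_left _ ht0.le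
      linarith
    nlinarith
  -- lower bound for ℙ A
  have hPA : 1 ≤ κ ^ 3 * (ℙ A).toReal := by
    have h1 := hc 1 0
    simp only [Complex.one_re, one_pow, mul_one, one_mul, sub_zero] at h1
    have hre2 : IntegrableOn (fun ω => (ξ ω).re ^ 2) A ℙ := by
      refine (integrable_const (κ ^ 2)).mono'
        ((Complex.measurable_re.comp hm).pow_const 2).aestronglyMeasurable
        (ae_restrict_of_forall_mem hA fun ω hω => ?_)
      have h3 : ‖ξ ω‖ ≤ κ := hω
      simp only [Real.norm_eq_abs]
      rw [_root_.abs_of_nonneg (sq_nonneg ((ξ ω).re))]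
      exact re_sq_le h3
    have h2 : ∫ ω in A, (ξ ω).re ^ 2 ∂ℙ ≤ ∫ ω in A, κ ^ 2 ∂ℙ := by
      refine setIntegral_mono_on hre2 (integrableOn_const (measure_ne_top _ _)) hA
        fun ω hω => ?_
      exact re_sq_le hω
    rw [setIntegral_const, smul_eq_mul] at h2
    have h4 : 1 / κ ≤ (ℙ A).toReal * κ ^ 2 := le_trans h1 h2
    have h6 : κ * (1 / κ) ≤ κ * ((ℙ A).toReal * κ ^ 2) := mul_le_mul_of_nonneg_left h4 hκ0.le
    rw [mul_one_div_cancel hκ0.ne'] at h6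
    nlinarith [h6]
  -- Fourier computation
  set B := t ^ 2 * a.re ^ 2 / (8 * κ ^ 4) with hBdef
  have hB0 : 0 ≤ B := by positivity
  set C : ℝ := ∫ ω, Real.cos (X ω) with hCdef
  set S : ℝ := ∫ ω, Real.sin (X ω) with hSdef
  have hcosI : Integrable (fun ω => Real.cos (X ω)) ℙ :=
    bddInt_real _ hXm.cos 1 fun x => Real.abs_cos_le_one _
  have hsinI : Integrable (fun ω => Real.sin (X ω)) ℙ :=
    bddInt_real _ hXm.sin 1 fun x => Real.abs_sin_le_one _
  have meas2 : Measurable (fun p : Ω × Ω => X p.1 - X p.2) :=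
    (hXm.comp measurable_fst).sub (hXm.comp measurable_snd)
  have hccI : Integrable (fun p : Ω × Ω => Real.cos (X p.1) * Real.cos (X p.2)) (((ℙ : Measure Ω).prod ℙ)) := by
    refine bddInt_real _ ((hXm.comp measurable_fst).cos.mul (hXm.comp measurable_snd).cos) 1
      fun p => ?_
    rw [abs_mul]
    exact mul_le_one₀ (Real.abs_cos_le_one _) (abs_nonneg _) (Real.abs_cos_le_one _)
  have hssI : Integrable (fun p : Ω × Ω => Real.sin (X p.1) * Real.sin (X p.2)) (((ℙ : Measure Ω).prod ℙ)) := by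
    refine bddInt_real _ ((hXm.comp measurable_fst).sin.mul (hXm.comp measurable_snd).sin) 1
      fun p => ?_
    rw [abs_mul]
    exact mul_le_one₀ (Real.abs_sin_le_one _) (abs_nonneg _) (Real.abs_sin_le_one _)
  have hcos2I : Integrable (fun p : Ω × Ω => Real.cos (X p.1 - X p.2)) (((ℙ : Measure Ω).prod ℙ)) :=
    bddInt_real _ meas2.cos 1 fun p => Real.abs_cos_le_one _
  have honemcosI : Integrable (fun p : Ω × Ω => 1 - Real.cos (X p.1 - X p.2)) (((ℙ : Measure Ω).prod ℙ)) :=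
    (integrable_const 1).sub hcos2I
  have hprod2 : (C ^ 2 + S ^ 2 : ℝ) = ∫ p : Ω × Ω, Real.cos (X p.1 - X p.2) ∂(((ℙ : Measure Ω).prod ℙ)) := by
    have e : (fun p : Ω × Ω => Real.cos (X p.1 - X p.2))
        = fun p : Ω × Ω => Real.cos (X p.1) * Real.cos (X p.2)
            + Real.sin (X p.1) * Real.sin (X p.2) := funext fun p => Real.cos_sub _ _
    rw [e, integral_add hccI hssI,
      integral_prod_mul (f := fun x => Real.cos (X x)) (g := fun x => Real.cos (X x)),
      integral_prod_mul (f := fun x => Real.sin (X x)) (g := fun x => Real.sin (X x)),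
      ← hCdef, ← hSdef]
    ring
  have key1 : 1 - (C ^ 2 + S ^ 2)
      = ∫ p : Ω × Ω, (1 - Real.cos (X p.1 - X p.2)) ∂(((ℙ : Measure Ω).prod ℙ)) := by
    rw [integral_sub (integrable_const 1) hcos2I, integral_const]
    simp [hprod2]
  have key2 : ∫ p in A ×ˢ A, (1 - Real.cos (X p.1 - X p.2)) ∂(((ℙ : Measure Ω).prod ℙ))
      ≤ ∫ p : Ω × Ω, (1 - Real.cos (X p.1 - X p.2)) ∂(((ℙ : Measure Ω).prod ℙ)) :=
    setIntegral_le_integral honemcosI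
      (ae_of_all _ fun p => by simp only [Pi.zero_apply]; linarith [Real.cos_le_one (X p.1 - X p.2)])
  have habs1 : ∀ p : Ω × Ω, p ∈ A ×ˢ A → |X p.1 - X p.2| ≤ 1 := by
    intro p hp
    obtain ⟨hp1, hp2⟩ := hp
    have i1 := abs_le.1 (hXb _ hp1)
    have i2 := abs_le.1 (hXb _ hp2)
    exact abs_le.2 ⟨by linarith, by linarith⟩
  have hsqI : Integrable (fun p : Ω × Ω => (X p.1 - X p.2) ^ 2)
      ((((ℙ : Measure Ω).prod ℙ)).restrict (A ×ˢ A)) := by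
    refine (integrable_const (1 : ℝ)).mono' (meas2.pow_const 2).aestronglyMeasurable
      (ae_restrict_of_forall_mem (hA.prod hA) fun p hp => ?_)
    have := habs1 p hp
    simp only [Real.norm_eq_abs]
    rw [_root_.abs_of_nonneg (sq_nonneg _)]
    nlinarith [abs_nonneg (X p.1 - X p.2), _root_.sq_abs (X p.1 - X p.2)]
  have key3 : ∫ p in A ×ˢ A, (1 / 4) * (X p.1 - X p.2) ^ 2 ∂(((ℙ : Measure Ω).prod ℙ))
      ≤ ∫ p in A ×ˢ A, (1 - Real.cos (X p.1 - X p.2)) ∂(((ℙ : Measure Ω).prod ℙ)) := by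
    refine setIntegral_mono_on (hsqI.const_mul _) honemcosI.integrableOn (hA.prod hA)
      fun p hp => ?_
    have := cos_ub (habs1 p hp)
    linarith
  -- lower bound the quadratic integral using the controlled hypothesis
  set Z : ℂ := (t : ℂ) * a with hZdef
  have hZre : Z.re = t * a.re := by
    simp [hZdef, Complex.mul_re, Complex.ofReal_re, Complex.ofReal_im]
  have inner : ∀ x : Ω, (1 / κ) * Z.re ^ 2 ≤ ∫ y in A, (X x - X y) ^ 2 ∂ℙ := by
    intro x
    have h := hc Z ((X x : ℝ) : ℂ)
    have e : ∀ y : Ω, ((Z * ξ y - ((X x : ℝ) : ℂ)).re) ^ 2 = (X x - X y) ^ 2 := by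
      intro y
      have h2 : (Z * ξ y).re = X y := by
        rw [hZdef, mul_assoc, Complex.re_ofReal_mul]
      rw [Complex.sub_re, h2, Complex.ofReal_re]
      ring
    simp only [e] at h
    exact h
  have key5 : (ℙ A).toReal * ((1 / κ) * Z.re ^ 2)
      ≤ ∫ p in A ×ˢ A, (X p.1 - X p.2) ^ 2 ∂(((ℙ : Measure Ω).prod ℙ)) := by
    have hsqI' : Integrable (fun p : Ω × Ω => (X p.1 - X p.2) ^ 2)
        (((ℙ : Measure Ω).restrict A).prod ((ℙ : Measure Ω).restrict A)) := by
      rw [Measure.prod_restrict]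
      exact hsqI
    have hiter : ∫ p in A ×ˢ A, (X p.1 - X p.2) ^ 2 ∂(((ℙ : Measure Ω).prod ℙ))
        = ∫ x, (∫ y, (X x - X y) ^ 2 ∂((ℙ : Measure Ω).restrict A)) ∂((ℙ : Measure Ω).restrict A) := by
      rw [← Measure.prod_restrict]
      exact integral_prod _ hsqI'
    have hg : Integrable (fun x => ∫ y, (X x - X y) ^ 2 ∂((ℙ : Measure Ω).restrict A)) ((ℙ : Measure Ω).restrict A) :=
      hsqI'.integral_prod_left
    have hmono : ∫ x, (1 / κ) * Z.re ^ 2 ∂((ℙ : Measure Ω).restrict A)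
        ≤ ∫ x, (∫ y, (X x - X y) ^ 2 ∂((ℙ : Measure Ω).restrict A)) ∂((ℙ : Measure Ω).restrict A) :=
      integral_mono (integrable_const _) hg fun x => inner x
    rw [integral_const, measureReal_restrict_apply_univ, smul_eq_mul] at hmono
    rw [hiter]
    exact hmono
  -- combine everything
  have comb : (1 / 4) * ((ℙ A).toReal * ((1 / κ) * Z.re ^ 2)) ≤ 1 - (C ^ 2 + S ^ 2) := by
    have m1 : (1 / 4) * ((ℙ A).toReal * ((1 / κ) * Z.re ^ 2))
        ≤ ∫ p in A ×ˢ A, (1 / 4) * (X p.1 - X p.2) ^ 2 ∂(((ℙ : Measure Ω).prod ℙ)) := by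
      rw [integral_const_mul]
      exact mul_le_mul_of_nonneg_left key5 (by norm_num)
    rw [key1]
    linarith
  have h2B : 2 * B ≤ 1 - (C ^ 2 + S ^ 2) := by
    have hq0 : (0 : ℝ) ≤ t ^ 2 * a.re ^ 2 / (4 * κ ^ 4) := by positivity
    have h7 := mul_le_mul_of_nonneg_left hPA hq0
    have h8 : t ^ 2 * a.re ^ 2 / (4 * κ ^ 4) * (κ ^ 3 * (ℙ A).toReal)
        = (1 / 4) * ((ℙ A).toReal * ((1 / κ) * Z.re ^ 2)) := by
      rw [hZre]
      field_simp
    rw [mul_one, h8] at h7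
    have h9 : 2 * B = t ^ 2 * a.re ^ 2 / (4 * κ ^ 4) := by rw [hBdef]; ring
    linarith
  have hCS1 : C ^ 2 + S ^ 2 ≤ 1 - 2 * B := by linarith
  have hdec : (∫ ω, Complex.exp (((t * (a * ξ ω).re : ℝ) : ℂ) * I))
      = ((C : ℝ) : ℂ) + ((S : ℝ) : ℂ) * I := exp_decomp ℙ X hXm
  rw [hdec]
  have hnorm : ‖((C : ℝ) : ℂ) + ((S : ℝ) : ℂ) * I‖ ^ 2 = C ^ 2 + S ^ 2 := by
    rw [Complex.sq_norm]
    simp [Complex.normSq_apply]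
    ring
  have hexp : (1 : ℝ) - 2 * B ≤ Real.exp (-(2 * B)) := by
    linarith [Real.add_one_le_exp (-(2 * B))]
  have hsq : (Real.exp (-B)) ^ 2 = Real.exp (-(2 * B)) := by
    rw [pow_two, ← Real.exp_add]
    ring_nf
  have final2 : ‖((C : ℝ) : ℂ) + ((S : ℝ) : ℂ) * I‖ ^ 2 ≤ (Real.exp (-B)) ^ 2 := by
    rw [hnorm, hsq]
    linarith
  nlinarith [norm_nonneg (((C : ℝ) : ℂ) + ((S : ℝ) : ℂ) * I), Real.exp_pos (-B), final2]

set_option maxHeartbeats 1000000 in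
/-- Anti-concentration for linear forms in independent `κ`-controlled variables:
there is `c > 0` depending only on `κ` such that for every `z` and unit vector `v`,
`P(|ξ₁v₁ + ⋯ + ξₙvₙ − z| ≤ c) ≤ 1 − c`. -/
theorem stmt11 (κ : ℝ) (hκ : 1 ≤ κ) :
    ∃ c > (0 : ℝ),
      ∀ (Ω : Type) [MeasureSpace Ω], IsProbabilityMeasure (ℙ : Measure Ω) →
      ∀ (n : ℕ) (ξ : Fin n → Ω → ℂ),
        (∀ j, Measurable (ξ j)) →
        iIndepFun ξ ℙ →
        (∀ j, Controlled κ (ξ j)) →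
        ∀ (z : ℂ) (v : Fin n → ℂ), (∑ j, ‖v j‖ ^ 2) = 1 →
          (ℙ {ω | ‖(∑ j, ξ j ω * v j) - z‖ ≤ c}).toReal ≤ 1 - c := by
  have hκ0 : (0 : ℝ) < κ := lt_of_lt_of_le one_pos hκ
  have hκ6 : (0 : ℝ) < κ ^ 6 := by positivity
  have hκ61 : (1 : ℝ) ≤ κ ^ 6 := by
    have := pow_le_pow_left₀ (zero_le_one) hκ 6
    simpa using this
  refine ⟨1 / (400 * κ ^ 6), by positivity, ?_⟩
  intro Ω _ hP n ξ hmeas hindep hctrl z v hv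
  set c : ℝ := 1 / (400 * κ ^ 6) with hcdef
  have hc0 : 0 < c := by positivity
  have hc1 : c ≤ 1 := by
    rw [hcdef]
    rw [div_le_one (by positivity)]
    nlinarith [hκ61]
  by_contra hcon
  push_neg at hcon
  -- choose the direction u
  have hu : ∃ u : ℂ, ‖u‖ = 1 ∧ 1 / 2 ≤ ∑ j, ((u * v j).re) ^ 2 := by
    have hnorm : ∀ w : ℂ, ‖w‖ ^ 2 = w.re ^ 2 + w.im ^ 2 := fun w => by
      rw [Complex.sq_norm, Complex.normSq_apply]; ring
    by_cases hcase : 1 / 2 ≤ ∑ j, (v j).re ^ 2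
    · exact ⟨1, by simp, by simpa using hcase⟩
    · refine ⟨-I, by simp, ?_⟩
      have hsplit : (∑ j, (v j).re ^ 2) + ∑ j, (v j).im ^ 2 = 1 := by
        rw [← Finset.sum_add_distrib]
        rw [← hv]
        exact Finset.sum_congr rfl fun j _ => (hnorm (v j)).symm
      push_neg at hcase
      have him : 1 / 2 ≤ ∑ j, (v j).im ^ 2 := by linarith
      have hre : ∀ j, ((-I) * v j).re = (v j).im := fun j => by
        simp [Complex.mul_re]
      simp_rw [hre]
      exact him
  obtain ⟨u, hu1, hσ⟩ := hu
  have hvle : ∀ j, ‖u * v j‖ ≤ 1 := by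
    intro j
    rw [norm_mul, hu1, one_mul]
    have h1 : ‖v j‖ ^ 2 ≤ 1 := by
      rw [← hv]
      exact Finset.single_le_sum (f := fun j => ‖v j‖ ^ 2) (fun i _ => sq_nonneg _)
        (Finset.mem_univ j)
    nlinarith [norm_nonneg (v j)]
  set t : ℝ := 1 / (2 * κ) with htdef
  have ht0 : 0 < t := by rw [htdef]; positivity
  have ht1 : t ≤ 1 := by
    rw [htdef, div_le_one (by positivity)]
    nlinarith
  -- the characteristic-function factors
  set g : Fin n → ℂ → ℂ :=
    fun j x => Complex.exp (((t * ((u * v j) * x).re : ℝ) : ℂ) * I) with hgdef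
  have hgm : ∀ j, Measurable (g j) := by
    intro j
    apply Complex.measurable_exp.comp
    exact (Complex.measurable_ofReal.comp
      ((Complex.measurable_re.comp (measurable_id.const_mul (u * v j))).const_mul t)).mul_const I
  set f : Fin n → Ω → ℂ := fun j => g j ∘ ξ j with hfdef
  have hfm : ∀ j, Measurable (f j) := fun j => (hgm j).comp (hmeas j)
  have hfnorm : ∀ j ω, ‖f j ω‖ = 1 := by
    intro j ω
    rw [hfdef]
    simp only [Function.comp_apply, hgdef]
    rw [Complex.norm_exp_ofReal_mul_I]
  have hfi : ∀ j, Integrable (f j) ℙ := fun j =>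
    bddInt_cx ℙ (hfm j) 1 fun ω => le_of_eq (hfnorm j ω)
  have hind2 : iIndepFun f ℙ := hindep.comp g hgm
  have hprodint := iIndep_integral_prod_cx f hfm hind2 hfi Finset.univ
  -- per-coordinate bounds
  have hcoord : ∀ j, ‖∫ ω, f j ω‖ ≤
      Real.exp (-(t ^ 2 * (u * v j).re ^ 2 / (8 * κ ^ 4))) := by
    intro j
    exact coord_bound κ hκ t htdef (ξ j) (hmeas j) ((hctrl j).2) (u * v j) (hvle j)
  -- the sum Y and its characteristic function
  set Y : Ω → ℝ := fun ω => (u * ((∑ j, ξ j ω * v j) - z)).re with hYdef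
  have hSm : Measurable (fun ω => ∑ j, ξ j ω * v j) :=
    Finset.measurable_sum _ fun j _ => (hmeas j).mul_const (v j)
  have hYm : Measurable Y := Complex.measurable_re.comp ((hSm.sub_const z).const_mul u)
  set m : ℝ := (u * z).re with hmdef
  have hexp_eq : ∀ ω, Complex.exp (((t * Y ω : ℝ) : ℂ) * I)
      = (∏ j, f j ω) / Complex.exp (((t * m : ℝ) : ℂ) * I) := by
    intro ω
    have e1 : u * ((∑ j, ξ j ω * v j) - z) = (∑ j, (u * v j) * ξ j ω) - u * z := by
      rw [mul_sub, Finset.mul_sum]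
      congr 1
      exact Finset.sum_congr rfl fun j _ => by ring
    have e2 : Y ω = (∑ j, ((u * v j) * ξ j ω).re) - m := by
      rw [hYdef]
      simp only []
      rw [e1, Complex.sub_re, Complex.re_sum]
    have e3 : t * Y ω + t * m = ∑ j, t * ((u * v j) * ξ j ω).re := by
      rw [e2, mul_sub, Finset.mul_sum]
      ring
    have e4 : ((t * Y ω : ℝ) : ℂ) * I + ((t * m : ℝ) : ℂ) * I
        = ∑ j, ((t * ((u * v j) * ξ j ω).re : ℝ) : ℂ) * I := by
      rw [← add_mul, ← Complex.ofReal_add, e3, Complex.ofReal_sum, Finset.sum_mul]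
    have e5 : ((t * Y ω : ℝ) : ℂ) * I
        = (∑ j, ((t * ((u * v j) * ξ j ω).re : ℝ) : ℂ) * I) - ((t * m : ℝ) : ℂ) * I := by
      rw [← e4]; ring
    rw [e5, Complex.exp_sub, Complex.exp_sum]
    simp only [hfdef, hgdef, Function.comp_apply]
  set φ : ℂ := ∫ ω, Complex.exp (((t * Y ω : ℝ) : ℂ) * I) with hφdef
  have hφ_eq : φ = (∫ ω, ∏ j, f j ω) / Complex.exp (((t * m : ℝ) : ℂ) * I) := by
    rw [hφdef]
    simp only [hexp_eq]
    exact integral_div _ _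
  have hφnorm : ‖φ‖ ≤ Real.exp (-(1 / (64 * κ ^ 6))) := by
    rw [hφ_eq, norm_div, Complex.norm_exp_ofReal_mul_I,
      div_one, hprodint.2, norm_prod]
    calc ∏ j, ‖∫ ω, f j ω‖
        ≤ ∏ j, Real.exp (-(t ^ 2 * (u * v j).re ^ 2 / (8 * κ ^ 4))) :=
          Finset.prod_le_prod (fun j _ => norm_nonneg _) (fun j _ => hcoord j)
      _ = Real.exp (∑ j, -(t ^ 2 * (u * v j).re ^ 2 / (8 * κ ^ 4))) := (Real.exp_sum _ _).symm
      _ ≤ Real.exp (-(1 / (64 * κ ^ 6))) := by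
          apply Real.exp_le_exp.2
          have hBsum : 1 / (64 * κ ^ 6) ≤ ∑ j, t ^ 2 * (u * v j).re ^ 2 / (8 * κ ^ 4) := by
            have e : ∀ j : Fin n, t ^ 2 * (u * v j).re ^ 2 / (8 * κ ^ 4)
                = t ^ 2 / (8 * κ ^ 4) * (u * v j).re ^ 2 := fun j => by ring
            simp_rw [e]
            rw [← Finset.mul_sum]
            have h1 : t ^ 2 / (8 * κ ^ 4) * (1 / 2) ≤ t ^ 2 / (8 * κ ^ 4) * ∑ j, (u * v j).re ^ 2 :=
              mul_le_mul_of_nonneg_left hσ (by positivity)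
            have h2 : t ^ 2 / (8 * κ ^ 4) * (1 / 2) = 1 / (64 * κ ^ 6) := by
              rw [htdef]
              field_simp
              ring
            linarith
          have e6 : ∑ j, -(t ^ 2 * (u * v j).re ^ 2 / (8 * κ ^ 4))
              = -∑ j, t ^ 2 * (u * v j).re ^ 2 / (8 * κ ^ 4) := by
            rw [← Finset.sum_neg_distrib]
          rw [e6]
          linarith
  have hexpub : Real.exp (-(1 / (64 * κ ^ 6))) ≤ 1 - 1 / (128 * κ ^ 6) := by
    have h1 : (0 : ℝ) ≤ 1 / (64 * κ ^ 6) := by positivity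
    have h2 : 1 / (64 * κ ^ 6) ≤ 1 := by
      rw [div_le_one (by positivity)]
      nlinarith [hκ61]
    have h3 := exp_neg_ub h1 h2
    have h4 : 1 / (64 * κ ^ 6) / 2 = 1 / (128 * κ ^ 6) := by
      field_simp
      ring
    linarith
  have hdecφ : φ = ((∫ ω, Real.cos (t * Y ω) : ℝ) : ℂ)
      + ((∫ ω, Real.sin (t * Y ω) : ℝ) : ℂ) * I := by
    rw [hφdef]
    exact exp_decomp ℙ (fun ω => t * Y ω) (hYm.const_mul t)
  have hφre : φ.re = ∫ ω, Real.cos (t * Y ω) := by rw [hdecφ]; simp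
  set E : Set Ω := {ω | ‖(∑ j, ξ j ω * v j) - z‖ ≤ c} with hEdef
  have hEm : MeasurableSet E := measurableSet_le (hSm.sub_const z).norm measurable_const
  set p : ℝ := (ℙ E).toReal with hpdef
  have hple : p ≤ 1 := by
    rw [hpdef]
    have h1 : (ℙ E).toReal ≤ (1 : ENNReal).toReal :=
      ENNReal.toReal_mono ENNReal.one_ne_top prob_le_one
    simpa using h1
  have hcompl : (ℙ Eᶜ).toReal = 1 - p := by
    rw [measure_compl hEm (measure_ne_top _ _), measure_univ,
      ENNReal.toReal_sub_of_le prob_le_one ENNReal.one_ne_top, ENNReal.toReal_one, hpdef]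
  have hcosInt : Integrable (fun ω => Real.cos (t * Y ω)) ℙ :=
    bddInt_real _ (hYm.const_mul t).cos 1 fun x => Real.abs_cos_le_one _
  have hlow : 1 - 3 * c < ∫ ω, Real.cos (t * Y ω) := by
    have hsplit : ∫ ω, Real.cos (t * Y ω)
        = (∫ ω in E, Real.cos (t * Y ω)) + ∫ ω in Eᶜ, Real.cos (t * Y ω) :=
      (integral_add_compl hEm hcosInt).symm
    have hb1 : p * (1 - c) ≤ ∫ ω in E, Real.cos (t * Y ω) := by
      have hconst : ∫ _ω in E, (1 - c) ∂ℙ = p * (1 - c) := by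
        rw [setIntegral_const, smul_eq_mul, hpdef, Measure.real]
      rw [← hconst]
      refine setIntegral_mono_on (integrableOn_const (measure_ne_top _ _))
        hcosInt.integrableOn hEm fun ω hω => ?_
      have hωE : ‖(∑ j, ξ j ω * v j) - z‖ ≤ c := hω
      have hY1 : |Y ω| ≤ c := by
        have h1 : |Y ω| ≤ ‖u * ((∑ j, ξ j ω * v j) - z)‖ := by
          rw [hYdef]
          exact Complex.abs_re_le_norm _
        rw [norm_mul, hu1, one_mul] at h1
        exact le_trans h1 hωE
      have htY : |t * Y ω| ≤ c := by
        rw [abs_mul, abs_of_pos ht0]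
        nlinarith [abs_nonneg (Y ω)]
      have habs : |t * Y ω| ≤ 1 := le_trans htY hc1
      have hclb := cos_lb habs
      have h2 : (t * Y ω) ^ 2 ≤ c ^ 2 := by
        nlinarith [abs_nonneg (t * Y ω), _root_.sq_abs (t * Y ω)]
      nlinarith
    have hb2 : -(1 - p) ≤ ∫ ω in Eᶜ, Real.cos (t * Y ω) := by
      have hconst : ∫ _ω in Eᶜ, (-1 : ℝ) ∂ℙ = -(1 - p) := by
        rw [setIntegral_const, Measure.real, smul_eq_mul, hcompl]
        ring
      rw [← hconst]
      exact setIntegral_mono_on (integrableOn_const (measure_ne_top _ _))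
        hcosInt.integrableOn hEm.compl fun ω _hω => Real.neg_one_le_cos _
    rw [hsplit]
    nlinarith [mul_le_mul_of_nonneg_right hple hc0.le]
  have hfin1 : φ.re ≤ ‖φ‖ := by
        exact Complex.re_le_norm φ
  have hchain : 1 - 3 * c < 1 - 1 / (128 * κ ^ 6) := by
    calc 1 - 3 * c < φ.re := by rw [hφre]; exact hlow
      _ ≤ ‖φ‖ := hfin1
      _ ≤ Real.exp (-(1 / (64 * κ ^ 6))) := hφnorm
      _ ≤ 1 - 1 / (128 * κ ^ 6) := hexpub
  have hcontra : 3 * c ≤ 1 / (128 * κ ^ 6) := by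
    have e : 3 * c = 3 / (400 * κ ^ 6) := by rw [hcdef]; ring
    rw [e, div_le_div_iff₀ (by positivity) (by positivity)]
    nlinarith [hκ61]
  linarith
end

section
/- (Lower bound on ‖Av‖ for a fixed direction) Let N_n be an n×n random matrix with independent entries each having κ-controlled second moment for a fixed κ ≥ 1. Then there exist constants c, c' > 0 depending only on κ such that for any fixed unit vector v ∈ ℂ^n and any deterministic n×n matrix M, P(‖(M+N_n)v‖ ≤ c n^{1/2}) ≤ exp(−c' n). -/
open MeasureTheory ProbabilityTheory Complex Matrix

namespace Stmt12Aux

lemma one_sub_cos_lower {t : ℝ} (ht : |t| ≤ Real.pi) : t ^ 2 / 5 ≤ 1 - Real.cos t := by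
  have h := Real.cos_le_one_sub_mul_cos_sq ht
  have hpi : Real.pi < 3.15 := Real.pi_lt_d2
  have hpi2 : (0:ℝ) < Real.pi := Real.pi_pos
  have h2 : Real.pi ^ 2 < 10 := by nlinarith
  have h3 : t ^ 2 / 5 ≤ 2 * t ^ 2 / Real.pi ^ 2 := by
    rw [div_le_div_iff₀ (by norm_num) (by positivity)]
    nlinarith [sq_nonneg t]
  have h4 : 2 / Real.pi ^ 2 * t ^ 2 = 2 * t ^ 2 / Real.pi ^ 2 := by ring
  linarith

/-- Up to a shift by a lattice point, `1 - cos (s - β)` is bounded below by a quadratic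
near a fixed point `w`, uniformly for `|s| ≤ 1`. -/


lemma lattice_bound (β : ℝ) : ∃ w : ℝ, ∀ s : ℝ, |s| ≤ 1 →
    min ((s - w) ^ 2) 1 / 5 ≤ 1 - Real.cos (s - β) := by
  have hpi : (0:ℝ) < Real.pi := Real.pi_pos
  have hpi3 : (3:ℝ) < Real.pi := Real.pi_gt_three
  set r : ℤ := round (β / (2 * Real.pi)) with hr
  refine ⟨β - r * (2 * Real.pi), fun s hs => ?_⟩
  have hw : |β - r * (2 * Real.pi)| ≤ Real.pi := by
    have h1 : |β / (2 * Real.pi) - r| ≤ 1 / 2 := abs_sub_round _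
    have h2 : β - r * (2 * Real.pi) = (β / (2 * Real.pi) - r) * (2 * Real.pi) := by
      field_simp
    rw [h2, abs_mul, abs_of_pos (by positivity : (0:ℝ) < 2 * Real.pi)]
    calc |β / (2 * Real.pi) - ↑r| * (2 * Real.pi) ≤ (1/2) * (2 * Real.pi) := by
          apply mul_le_mul_of_nonneg_right h1 (by positivity)
      _ = Real.pi := by ring
  have hcos : Real.cos (s - β) = Real.cos (s - (β - r * (2 * Real.pi))) := by
    have : s - (β - r * (2 * Real.pi)) - r * (2 * Real.pi) = s - β := by ring
    rw [← Real.cos_sub_int_mul_two_pi (s - (β - r * (2 * Real.pi))) r, this]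
  rw [hcos]
  set w := β - r * (2 * Real.pi)
  by_cases hsw : |s - w| ≤ Real.pi
  · have := one_sub_cos_lower hsw
    have : min ((s - w) ^ 2) 1 / 5 ≤ (s - w) ^ 2 / 5 := by
      apply div_le_div_of_nonneg_right ?_ (by norm_num)
      · exact min_le_left _ _
    linarith [one_sub_cos_lower hsw]
  · push_neg at hsw
    have h1 : |s - w| ≤ 1 + Real.pi := by
      calc |s - w| ≤ |s| + |w| := abs_sub _ _
        _ ≤ 1 + Real.pi := add_le_add hs hw
    have hcosneg : Real.cos (s - w) ≤ 0 := by
      rw [← Real.cos_abs]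
      apply Real.cos_nonpos_of_pi_div_two_le_of_le
      · linarith
      · linarith
    have : min ((s - w) ^ 2) 1 / 5 ≤ 1 / 5 := by
      apply div_le_div_of_nonneg_right (min_le_right _ _) (by norm_num)
    linarith

/-- `1 - cos s ≤ 2 * min (s^2) 1`. -/


lemma one_sub_cos_upper (s : ℝ) : 1 - Real.cos s ≤ 2 * min (s ^ 2) 1 := by
  rcases le_or_gt (s ^ 2) 1 with h | h
  · rw [min_eq_left h]
    have := Real.one_sub_sq_div_two_le_cos (x := s)
    nlinarith [sq_nonneg s]
  · rw [min_eq_right h.le]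
    have := Real.neg_one_le_cos s
    linarith


lemma exp_neg_le_one_sub_half {m : ℝ} (h0 : 0 ≤ m) (h1 : m ≤ 1) :
    Real.exp (-m) ≤ 1 - m / 2 := by
  have h2 : 1 + m ≤ Real.exp m := by linarith [Real.add_one_le_exp m]
  have h3 : Real.exp (-m) = 1 / Real.exp m := by
    rw [Real.exp_neg]; ring
  rw [h3]
  have h4 : (0:ℝ) < 1 + m := by linarith
  have h5 : 1 / Real.exp m ≤ 1 / (1 + m) := by
    apply one_div_le_one_div_of_le h4 h2
  have h6 : 1 / (1 + m) ≤ 1 - m / 2 := by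
    rw [div_le_iff₀ h4]
    nlinarith
  linarith


lemma sq_le_of_abs_le {a b : ℝ} (h : |a| ≤ b) : a ^ 2 ≤ b ^ 2 := by
  nlinarith [abs_nonneg a, _root_.sq_abs a]

variable {Ω : Type} [MeasureSpace Ω] [IsProbabilityMeasure (ℙ : Measure Ω)]


variable {Ω : Type} [MeasureSpace Ω]

lemma iIndepFun_precomp {ι ι' : Type*} [Nonempty ι'] {β : Type*} {mβ : MeasurableSpace β}
    {f : ι → Ω → β} (h : iIndepFun f ℙ) {g : ι' → ι}
    (hg : Function.Injective g) :
    iIndepFun (fun j => f (g j)) ℙ := by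
  classical
  rw [iIndepFun_iff_measure_inter_preimage_eq_mul] at h ⊢
  intro S sets hsets
  have hinv : ∀ j : ι', Function.invFun g (g j) = j := fun j =>
    Function.leftInverse_invFun hg j
  have key := h (S.image g) (sets := fun i => sets (Function.invFun g i)) ?_
  · have hL : (⋂ i ∈ S.image g, f i ⁻¹' sets (Function.invFun g i))
        = ⋂ j ∈ S, f (g j) ⁻¹' sets j := by
      ext ω
      simp only [Set.mem_iInter, Finset.mem_image]
      constructor
      · intro hh j hj
        have := hh (g j) ⟨j, hj, rfl⟩
        rwa [hinv j] at this
      · rintro hh i ⟨j, hj, rfl⟩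
        rw [hinv j]
        exact hh j hj
    have hR : ∏ i ∈ S.image g, (ℙ : Measure Ω) (f i ⁻¹' sets (Function.invFun g i))
        = ∏ j ∈ S, (ℙ : Measure Ω) (f (g j) ⁻¹' sets j) := by
      rw [Finset.prod_image (fun a _ b _ hab => hg hab)]
      apply Finset.prod_congr rfl
      intro j _
      rw [hinv j]
    rw [hL, hR] at key
    exact key
  · intro i hi
    rcases Finset.mem_image.1 hi with ⟨j, hj, rfl⟩
    rw [hinv j]
    exact hsets j hj


variable [IsProbabilityMeasure (ℙ : Measure Ω)]

lemma integrable_of_bdd {E : Type*} [NormedAddCommGroup E] {f : Ω → E} {C : ℝ}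
    (hm : AEStronglyMeasurable f ℙ) (h : ∀ ω, ‖f ω‖ ≤ C) : Integrable f ℙ :=
  ⟨hm, HasFiniteIntegral.of_bounded (ae_of_all _ h)⟩

/-- product of two bounded independent complex random variables -/


lemma indepFun_integral_mul_complex {X Y : Ω → ℂ}
    (h : IndepFun X Y ℙ) (hmX : Measurable X) (hmY : Measurable Y)
    (hbX : ∀ ω, ‖X ω‖ ≤ 1) (hbY : ∀ ω, ‖Y ω‖ ≤ 1) :
    ∫ ω, X ω * Y ω = (∫ ω, X ω) * ∫ ω, Y ω := by
  have hXr : Measurable fun ω => (X ω).re := Complex.measurable_re.comp hmX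
  have hXi : Measurable fun ω => (X ω).im := Complex.measurable_im.comp hmX
  have hYr : Measurable fun ω => (Y ω).re := Complex.measurable_re.comp hmY
  have hYi : Measurable fun ω => (Y ω).im := Complex.measurable_im.comp hmY
  have bXr : ∀ ω, ‖(X ω).re‖ ≤ 1 := fun ω => (Complex.abs_re_le_norm _).trans (hbX ω)
  have bXi : ∀ ω, ‖(X ω).im‖ ≤ 1 := fun ω => (Complex.abs_im_le_norm _).trans (hbX ω)
  have bYr : ∀ ω, ‖(Y ω).re‖ ≤ 1 := fun ω => (Complex.abs_re_le_norm _).trans (hbY ω)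
  have bYi : ∀ ω, ‖(Y ω).im‖ ≤ 1 := fun ω => (Complex.abs_im_le_norm _).trans (hbY ω)
  have iXr : Integrable (fun ω => (X ω).re) ℙ := integrable_of_bdd hXr.aestronglyMeasurable bXr
  have iXi : Integrable (fun ω => (X ω).im) ℙ := integrable_of_bdd hXi.aestronglyMeasurable bXi
  have iYr : Integrable (fun ω => (Y ω).re) ℙ := integrable_of_bdd hYr.aestronglyMeasurable bYr
  have iYi : Integrable (fun ω => (Y ω).im) ℙ := integrable_of_bdd hYi.aestronglyMeasurable bYi
  have iX : Integrable X ℙ := integrable_of_bdd hmX.aestronglyMeasurable hbX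
  have iY : Integrable Y ℙ := integrable_of_bdd hmY.aestronglyMeasurable hbY
  have iXY : Integrable (fun ω => X ω * Y ω) ℙ :=
    integrable_of_bdd (hmX.mul hmY).aestronglyMeasurable
      (fun ω => by
        rw [norm_mul]
        calc ‖X ω‖ * ‖Y ω‖ ≤ 1 * 1 := by
              exact mul_le_mul (hbX ω) (hbY ω) (norm_nonneg _) zero_le_one
          _ = 1 := by norm_num)
  have hrr : IndepFun (fun ω => (X ω).re) (fun ω => (Y ω).re) ℙ :=
    h.comp Complex.measurable_re Complex.measurable_re
  have hri : IndepFun (fun ω => (X ω).re) (fun ω => (Y ω).im) ℙ :=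
    h.comp Complex.measurable_re Complex.measurable_im
  have hir : IndepFun (fun ω => (X ω).im) (fun ω => (Y ω).re) ℙ :=
    h.comp Complex.measurable_im Complex.measurable_re
  have hii : IndepFun (fun ω => (X ω).im) (fun ω => (Y ω).im) ℙ :=
    h.comp Complex.measurable_im Complex.measurable_im
  have err : ∫ ω, (X ω).re * (Y ω).re = (∫ ω, (X ω).re) * ∫ ω, (Y ω).re :=
    hrr.integral_fun_mul_eq_mul_integral iXr.aestronglyMeasurable iYr.aestronglyMeasurable
  have eri : ∫ ω, (X ω).re * (Y ω).im = (∫ ω, (X ω).re) * ∫ ω, (Y ω).im :=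
    hri.integral_fun_mul_eq_mul_integral iXr.aestronglyMeasurable iYi.aestronglyMeasurable
  have eir : ∫ ω, (X ω).im * (Y ω).re = (∫ ω, (X ω).im) * ∫ ω, (Y ω).re :=
    hir.integral_fun_mul_eq_mul_integral iXi.aestronglyMeasurable iYr.aestronglyMeasurable
  have eii : ∫ ω, (X ω).im * (Y ω).im = (∫ ω, (X ω).im) * ∫ ω, (Y ω).im :=
    hii.integral_fun_mul_eq_mul_integral iXi.aestronglyMeasurable iYi.aestronglyMeasurable
  have reInt : ∀ {f : Ω → ℂ}, Integrable f ℙ → (∫ ω, f ω).re = ∫ ω, (f ω).re := by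
    intro f hf
    simpa using (Complex.reCLM.integral_comp_comm hf).symm
  have imInt : ∀ {f : Ω → ℂ}, Integrable f ℙ → (∫ ω, f ω).im = ∫ ω, (f ω).im := by
    intro f hf
    simpa using (Complex.imCLM.integral_comp_comm hf).symm
  apply Complex.ext
  · rw [reInt iXY, Complex.mul_re, reInt iX, reInt iY, imInt iX, imInt iY]
    calc ∫ ω, (X ω * Y ω).re
        = ∫ ω, ((X ω).re * (Y ω).re - (X ω).im * (Y ω).im) := by
          simp only [Complex.mul_re]
      _ = (∫ ω, (X ω).re * (Y ω).re) - ∫ ω, (X ω).im * (Y ω).im := by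
          apply integral_sub
          · exact integrable_of_bdd (hXr.mul hYr).aestronglyMeasurable (fun ω => by
              have := mul_le_mul (bXr ω) (bYr ω) (norm_nonneg _) zero_le_one
              simpa [abs_mul] using (by simpa [norm_mul] using this : ‖(X ω).re * (Y ω).re‖ ≤ 1))
          · exact integrable_of_bdd (hXi.mul hYi).aestronglyMeasurable (fun ω => by
              have := mul_le_mul (bXi ω) (bYi ω) (norm_nonneg _) zero_le_one
              simpa [abs_mul] using (by simpa [norm_mul] using this : ‖(X ω).im * (Y ω).im‖ ≤ 1))
      _ = (∫ ω, (X ω).re) * (∫ ω, (Y ω).re) - (∫ ω, (X ω).im) * ∫ ω, (Y ω).im := by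
          rw [err, eii]
  · rw [imInt iXY, Complex.mul_im, reInt iX, reInt iY, imInt iX, imInt iY]
    calc ∫ ω, (X ω * Y ω).im
        = ∫ ω, ((X ω).re * (Y ω).im + (X ω).im * (Y ω).re) := by
          simp only [Complex.mul_im]
      _ = (∫ ω, (X ω).re * (Y ω).im) + ∫ ω, (X ω).im * (Y ω).re := by
          apply integral_add
          · exact integrable_of_bdd (hXr.mul hYi).aestronglyMeasurable (fun ω => by
              have := mul_le_mul (bXr ω) (bYi ω) (norm_nonneg _) zero_le_one
              simpa [abs_mul] using (by simpa [norm_mul] using this : ‖(X ω).re * (Y ω).im‖ ≤ 1))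
          · exact integrable_of_bdd (hXi.mul hYr).aestronglyMeasurable (fun ω => by
              have := mul_le_mul (bXi ω) (bYr ω) (norm_nonneg _) zero_le_one
              simpa [abs_mul] using (by simpa [norm_mul] using this : ‖(X ω).im * (Y ω).re‖ ≤ 1))
      _ = (∫ ω, (X ω).re) * (∫ ω, (Y ω).im) + (∫ ω, (X ω).im) * ∫ ω, (Y ω).re := by
          rw [eri, eir]

/-- integral of a product of independent bounded complex random variables indexed by a finset -/


lemma iIndep_integral_prod_complex {ι : Type*} [DecidableEq ι] {g : ι → Ω → ℂ}
    (h : iIndepFun g ℙ) (hm : ∀ i, Measurable (g i))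
    (hb : ∀ i ω, ‖g i ω‖ ≤ 1) (s : Finset ι) :
    ∫ ω, ∏ i ∈ s, g i ω = ∏ i ∈ s, ∫ ω, g i ω := by
  classical
  induction s using Finset.induction_on with
  | empty => simp
  | insert _ _ hi =>
    rename_i i s ih
    have hprodmeas : Measurable fun ω => ∏ j ∈ s, g j ω :=
      Finset.measurable_prod s (fun j _ => hm j)
    have hprodbd : ∀ ω, ‖∏ j ∈ s, g j ω‖ ≤ 1 := by
      intro ω
      calc ‖∏ j ∈ s, g j ω‖ = ∏ j ∈ s, ‖g j ω‖ := by
            rw [norm_prod]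
        _ ≤ ∏ j ∈ s, 1 := Finset.prod_le_prod (fun j _ => norm_nonneg _) (fun j _ => hb j ω)
        _ = 1 := Finset.prod_const_one
    have hIndep : IndepFun (∏ j ∈ s, g j) (g i) ℙ :=
      h.indepFun_finset_prod_of_notMem hm hi
    have hIndep' : IndepFun (fun ω => ∏ j ∈ s, g j ω) (g i) ℙ := by
      have : (∏ j ∈ s, g j) = fun ω => ∏ j ∈ s, g j ω := by
        funext ω; simp [Finset.prod_apply]
      rwa [this] at hIndep
    simp only [Finset.prod_insert hi]
    rw [← ih]
    have := indepFun_integral_mul_complex hIndep' hprodmeas (hm i) hprodbd (hb i)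
    calc ∫ ω, g i ω * ∏ j ∈ s, g j ω = ∫ ω, (∏ j ∈ s, g j ω) * g i ω := by
          congr 1; funext ω; ring
      _ = (∫ ω, ∏ j ∈ s, g j ω) * ∫ ω, g i ω := this
      _ = (∫ ω, g i ω) * ∫ ω, ∏ j ∈ s, g j ω := by ring

/-- integral of a product of pairwise-"prod-independent" bounded real random variables -/


lemma integral_prod_pairwise_real {ι : Type*} [DecidableEq ι] {h : ι → Ω → ℝ}
    (hm : ∀ i, Measurable (h i)) (hb : ∀ i ω, ‖h i ω‖ ≤ 1)
    (hp : ∀ (s : Finset ι) (i : ι), i ∉ s → IndepFun (fun ω => ∏ j ∈ s, h j ω) (h i) ℙ)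
    (s : Finset ι) :
    ∫ ω, ∏ i ∈ s, h i ω = ∏ i ∈ s, ∫ ω, h i ω := by
  classical
  induction s using Finset.induction_on with
  | empty => simp
  | insert _ _ hi =>
    rename_i i s ih
    have hprodmeas : Measurable fun ω => ∏ j ∈ s, h j ω :=
      Finset.measurable_prod s (fun j _ => hm j)
    have hprodbd : ∀ ω, ‖∏ j ∈ s, h j ω‖ ≤ 1 := by
      intro ω
      calc ‖∏ j ∈ s, h j ω‖ = ∏ j ∈ s, ‖h j ω‖ := by rw [norm_prod]
        _ ≤ ∏ j ∈ s, 1 := Finset.prod_le_prod (fun j _ => norm_nonneg _) (fun j _ => hb j ω)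
        _ = 1 := Finset.prod_const_one
    simp only [Finset.prod_insert hi]
    rw [← ih]
    have := (hp s i hi).integral_fun_mul_eq_mul_integral hprodmeas.aestronglyMeasurable (hm i).aestronglyMeasurable
    calc ∫ ω, h i ω * ∏ j ∈ s, h j ω = ∫ ω, (∏ j ∈ s, h j ω) * h i ω := by
          congr 1; funext ω; ring
      _ = (∫ ω, ∏ j ∈ s, h j ω) * ∫ ω, h i ω := this
      _ = (∫ ω, h i ω) * ∫ ω, ∏ j ∈ s, h j ω := by ring


lemma prob_trunc {κ : ℝ} (hκ : 1 ≤ κ) {ξ : Ω → ℂ} (hm : Measurable ξ)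
    (hc : Controlled κ ξ) :
    1 / κ ^ 3 ≤ (ℙ {ω | ‖ξ ω‖ ≤ κ}).toReal := by
  have hκ0 : (0:ℝ) < κ := lt_of_lt_of_le one_pos hκ
  set B : Set Ω := {ω | ‖ξ ω‖ ≤ κ} with hB
  have hBmeas : MeasurableSet B := measurableSet_le hm.norm measurable_const
  have h1 := hc.2 1 0
  have h1' : 1 / κ ≤ ∫ ω in B, ((ξ ω).re) ^ 2 := by
    simpa using h1
  have hle : ∫ ω in B, ((ξ ω).re) ^ 2 ≤ ∫ _ω in B, κ ^ 2 := by
    apply setIntegral_mono_on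
    · refine ⟨((Complex.measurable_re.comp hm).pow_const 2).aestronglyMeasurable, ?_⟩
      apply HasFiniteIntegral.of_bounded (C := κ ^ 2)
      filter_upwards [ae_restrict_mem hBmeas] with ω hω
      have h2 : |(ξ ω).re| ≤ κ := le_trans (Complex.abs_re_le_norm _) hω
      rw [Real.norm_eq_abs, _root_.abs_of_nonneg (sq_nonneg _)]
      calc ((ξ ω).re) ^ 2 ≤ κ ^ 2 := sq_le_of_abs_le h2
        _ ≤ κ ^ 2 := le_rfl
    · exact integrableOn_const
    · exact hBmeas
    · intro ω hω
      have h2 : |(ξ ω).re| ≤ κ := le_trans (Complex.abs_re_le_norm _) hω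
      exact sq_le_of_abs_le h2
  rw [setIntegral_const, smul_eq_mul] at hle
  have h3 : 1 / κ ≤ (ℙ B).toReal * κ ^ 2 := le_trans h1' hle
  rw [div_le_iff₀ hκ0] at h3
  rw [div_le_iff₀ (by positivity : (0:ℝ) < κ ^ 3)]
  calc 1 ≤ (ℙ B).toReal * κ ^ 2 * κ := h3
    _ = (ℙ B).toReal * κ ^ 3 := by ring

/-- Per-coordinate characteristic function bound. -/


lemma coord_charfun_bound {κ : ℝ} (hκ : 1 ≤ κ) {ξ : Ω → ℂ} (hm : Measurable ξ)
    (hc : Controlled κ ξ) {z : ℂ} (hz : ‖z‖ ≤ 1) :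
    ‖∫ ω, Complex.exp ((((1/κ) * (z * ξ ω).re : ℝ) : ℂ) * Complex.I)‖
      ≤ 1 - z.re ^ 2 / (45 * κ ^ 3) := by
  have hκ0 : (0:ℝ) < κ := lt_of_lt_of_le one_pos hκ
  set θ : ℝ := 1/κ with hθ
  have hθ0 : 0 < θ := by positivity
  set X : Ω → ℝ := fun ω => (z * ξ ω).re with hX
  have hXm : Measurable X := Complex.measurable_re.comp (measurable_const.mul hm)
  have hem : Measurable fun ω => Complex.exp (((θ * X ω : ℝ) : ℂ) * Complex.I) := by
    apply Measurable.cexp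
    exact (Complex.measurable_ofReal.comp (measurable_const.mul hXm)).mul measurable_const
  have hebd : ∀ ω, ‖Complex.exp (((θ * X ω : ℝ) : ℂ) * Complex.I)‖ = 1 := fun ω =>
    Complex.norm_exp_ofReal_mul_I _
  have heint : Integrable (fun ω => Complex.exp (((θ * X ω : ℝ) : ℂ) * Complex.I)) ℙ :=
    integrable_of_bdd hem.aestronglyMeasurable (fun ω => (hebd ω).le)
  set φ : ℂ := ∫ ω, Complex.exp (((θ * X ω : ℝ) : ℂ) * Complex.I) with hφ
  set β : ℝ := φ.arg with hβ
  have hstep1 : ((‖φ‖ : ℝ) : ℂ) = φ * Complex.exp (-(β:ℂ) * Complex.I) := by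
    have h0 := Complex.norm_mul_exp_arg_mul_I φ
    have h1 : Complex.exp ((β:ℂ) * Complex.I) * Complex.exp (-(β:ℂ) * Complex.I) = 1 := by
      rw [← Complex.exp_add]
      have h2 : (β:ℂ) * Complex.I + -(β:ℂ) * Complex.I = 0 := by ring
      rw [h2, Complex.exp_zero]
    calc ((‖φ‖ : ℝ) : ℂ) = ((‖φ‖ : ℝ) : ℂ) *
          (Complex.exp ((β:ℂ) * Complex.I) * Complex.exp (-(β:ℂ) * Complex.I)) := by
          rw [h1, mul_one]
      _ = (((‖φ‖ : ℝ) : ℂ) * Complex.exp ((β:ℂ) * Complex.I)) *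
            Complex.exp (-(β:ℂ) * Complex.I) := by ring
      _ = φ * Complex.exp (-(β:ℂ) * Complex.I) := by rw [h0]
  have hstep2 : φ * Complex.exp (-(β:ℂ) * Complex.I)
      = ∫ ω, Complex.exp (((θ * X ω - β : ℝ) : ℂ) * Complex.I) := by
    rw [hφ, ← integral_mul_const]
    congr 1
    funext ω
    rw [← Complex.exp_add]
    congr 1
    push_cast
    ring
  have hcosint : Integrable (fun ω => Real.cos (θ * X ω - β)) ℙ := by
    apply integrable_of_bdd (C := 1)
    · exact (Real.measurable_cos.comp
        ((measurable_const.mul hXm).sub measurable_const)).aestronglyMeasurable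
    · intro ω
      rw [Real.norm_eq_abs]
      exact Real.abs_cos_le_one _
  have hstep3 : ‖φ‖ = ∫ ω, Real.cos (θ * X ω - β) := by
    have he2 : Integrable (fun ω => Complex.exp (((θ * X ω - β : ℝ) : ℂ) * Complex.I)) ℙ := by
      apply integrable_of_bdd (C := 1)
      · apply Measurable.aestronglyMeasurable
        apply Measurable.cexp
        exact (Complex.measurable_ofReal.comp ((measurable_const.mul hXm).sub
          measurable_const)).mul measurable_const
      · intro ω
        exact (Complex.norm_exp_ofReal_mul_I _).le
    have h4 := congrArg Complex.re (hstep1.trans hstep2)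
    rw [Complex.ofReal_re] at h4
    rw [h4]
    have hre := Complex.reCLM.integral_comp_comm he2
    simp only [Complex.reCLM_apply] at hre
    rw [← hre]
    congr 1
    funext ω
    exact Complex.exp_ofReal_mul_I_re _
  have hstep4 : 1 - ‖φ‖ = ∫ ω, (1 - Real.cos (θ * X ω - β)) := by
    rw [hstep3, integral_sub (integrable_const 1) hcosint]
    simp
  obtain ⟨w, hw⟩ := lattice_bound β
  set B : Set Ω := {ω | ‖ξ ω‖ ≤ κ} with hB
  have hBmeas : MeasurableSet B := measurableSet_le hm.norm measurable_const
  have habsX : ∀ ω, ω ∈ B → |θ * X ω| ≤ 1 := by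
    intro ω hω
    have h1 : |X ω| ≤ ‖z * ξ ω‖ := Complex.abs_re_le_norm _
    have h2 : ‖z * ξ ω‖ ≤ 1 * κ := by
      rw [norm_mul]
      exact mul_le_mul hz hω (norm_nonneg _) zero_le_one
    rw [abs_mul, _root_.abs_of_pos hθ0]
    calc θ * |X ω| ≤ θ * κ := by
          apply mul_le_mul_of_nonneg_left _ hθ0.le
          calc |X ω| ≤ ‖z * ξ ω‖ := h1
            _ ≤ 1 * κ := h2
            _ = κ := one_mul κ
      _ = 1 := by rw [hθ]; field_simp
  have hminmeas : Measurable fun ω => min ((θ * X ω - w) ^ 2) 1 :=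
    (((measurable_const.mul hXm).sub measurable_const).pow_const 2).min measurable_const
  have hminint : IntegrableOn (fun ω => min ((θ * X ω - w) ^ 2) 1) B ℙ := by
    refine ⟨hminmeas.aestronglyMeasurable, ?_⟩
    apply HasFiniteIntegral.of_bounded (C := 1)
    apply ae_of_all
    intro ω
    rw [Real.norm_eq_abs,
      _root_.abs_of_nonneg (le_min (sq_nonneg _) zero_le_one)]
    exact min_le_right _ _
  have hmono1 : ∫ ω in B, min ((θ * X ω - w) ^ 2) 1 / 5
      ≤ ∫ ω, (1 - Real.cos (θ * X ω - β)) := by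
    have hint15 : IntegrableOn (fun ω => min ((θ * X ω - w) ^ 2) 1 / 5) B ℙ :=
      hminint.div_const 5
    have hcos1int : Integrable (fun ω => 1 - Real.cos (θ * X ω - β)) ℙ :=
      (integrable_const 1).sub hcosint
    calc ∫ ω in B, min ((θ * X ω - w) ^ 2) 1 / 5
        ≤ ∫ ω in B, (1 - Real.cos (θ * X ω - β)) := by
          apply setIntegral_mono_on hint15 hcos1int.integrableOn hBmeas
          intro ω hω
          exact hw (θ * X ω) (habsX ω hω)
      _ ≤ ∫ ω, (1 - Real.cos (θ * X ω - β)) := by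
          apply setIntegral_le_integral hcos1int
          apply ae_of_all
          intro ω
          simp only [Pi.zero_apply, sub_nonneg]
          exact Real.cos_le_one _
  have key : z.re ^ 2 / (9 * κ ^ 3) ≤ ∫ ω in B, min ((θ * X ω - w) ^ 2) 1 := by
    rcases le_or_gt (|w|) 2 with hw2 | hw2
    · -- |w| ≤ 2 : use the controlled second moment
      have hpt : ∀ ω ∈ B, (((θ:ℂ) * z * ξ ω - (w:ℂ)).re) ^ 2 / 9
          ≤ min ((θ * X ω - w) ^ 2) 1 := by
        intro ω hω
        have hre : (((θ:ℂ) * z) * ξ ω - (w:ℂ)).re = θ * X ω - w := by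
          rw [Complex.sub_re, Complex.ofReal_re, mul_assoc, Complex.re_ofReal_mul]
        have habs : |θ * X ω - w| ≤ 3 := by
          calc |θ * X ω - w| ≤ |θ * X ω| + |w| := abs_sub _ _
            _ ≤ 1 + 2 := add_le_add (habsX ω hω) hw2
            _ = 3 := by norm_num
        rw [hre]
        rcases le_or_gt ((θ * X ω - w) ^ 2) 1 with h | h
        · rw [min_eq_left h]
          linarith [sq_nonneg (θ * X ω - w)]
        · rw [min_eq_right h.le]
          have h9 : (θ * X ω - w) ^ 2 ≤ 9 := by
            calc (θ * X ω - w) ^ 2 ≤ 3 ^ 2 := sq_le_of_abs_le habs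
              _ = 9 := by norm_num
          linarith
      have hquadint : IntegrableOn (fun ω => (((θ:ℂ) * z * ξ ω - (w:ℂ)).re) ^ 2 / 9) B ℙ := by
        refine ⟨?_, ?_⟩
        · apply Measurable.aestronglyMeasurable
          exact ((Complex.measurable_re.comp
            ((measurable_const.mul hm).sub measurable_const)).pow_const 2).div_const 9
        · apply HasFiniteIntegral.of_bounded (C := 1)
          filter_upwards [ae_restrict_mem hBmeas] with ω hω
          have hre : (((θ:ℂ) * z) * ξ ω - (w:ℂ)).re = θ * X ω - w := by
            rw [Complex.sub_re, Complex.ofReal_re, mul_assoc, Complex.re_ofReal_mul]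
          have habs : |θ * X ω - w| ≤ 3 := by
            calc |θ * X ω - w| ≤ |θ * X ω| + |w| := abs_sub _ _
              _ ≤ 1 + 2 := add_le_add (habsX ω hω) hw2
              _ = 3 := by norm_num
          rw [Real.norm_eq_abs, _root_.abs_of_nonneg (by positivity), hre]
          have h9 : (θ * X ω - w) ^ 2 ≤ 9 := by
            calc (θ * X ω - w) ^ 2 ≤ 3 ^ 2 := sq_le_of_abs_le habs
              _ = 9 := by norm_num
          linarith
      have hcontrol := hc.2 ((θ:ℂ) * z) (w:ℂ)
      have hrez : ((θ:ℂ) * z).re = θ * z.re := Complex.re_ofReal_mul _ _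
      calc z.re ^ 2 / (9 * κ ^ 3)
          = (1 / κ * ((θ:ℂ) * z).re ^ 2) / 9 := by
            rw [hrez, hθ, mul_pow, div_pow, one_pow]
            rw [div_eq_div_iff (by positivity) (by positivity)]
            field_simp
        _ ≤ (∫ ω in B, (((θ:ℂ) * z * ξ ω - (w:ℂ)).re) ^ 2) / 9 := by
            apply div_le_div_of_nonneg_right ?_ (by norm_num)
            · exact hcontrol
        _ = ∫ ω in B, (((θ:ℂ) * z * ξ ω - (w:ℂ)).re) ^ 2 / 9 := (integral_div _ _).symm
        _ ≤ ∫ ω in B, min ((θ * X ω - w) ^ 2) 1 :=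
            setIntegral_mono_on hquadint hminint hBmeas hpt
    · -- |w| > 2 : the minimum is 1 on B
      have hpt : ∀ ω ∈ B, (1:ℝ) ≤ min ((θ * X ω - w) ^ 2) 1 := by
        intro ω hω
        have h1 := habsX ω hω
        have h2 : |w| ≤ |θ * X ω| + |θ * X ω - w| := by
          calc |w| = |θ * X ω - (θ * X ω - w)| := by ring_nf
            _ ≤ |θ * X ω| + |θ * X ω - w| := abs_sub _ _
        have h3 : 1 ≤ |θ * X ω - w| := by linarith
        have h4 : 1 ≤ (θ * X ω - w) ^ 2 := by
          calc (1:ℝ) = 1 ^ 2 := by norm_num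
            _ ≤ (θ * X ω - w) ^ 2 := by
              rw [← _root_.sq_abs (θ * X ω - w)]
              exact pow_le_pow_left₀ zero_le_one h3 2
        exact le_min h4 le_rfl
      have hz2 : z.re ^ 2 ≤ 1 := by
        calc z.re ^ 2 ≤ 1 ^ 2 := sq_le_of_abs_le (le_trans (Complex.abs_re_le_norm z) hz)
          _ = 1 := one_pow 2
      calc z.re ^ 2 / (9 * κ ^ 3) ≤ 1 / κ ^ 3 := by
            apply div_le_div₀ zero_le_one hz2 (by positivity)
            nlinarith [pow_pos hκ0 3]
        _ ≤ (ℙ B).toReal := prob_trunc hκ hm hc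
        _ = ∫ _ω in B, (1:ℝ) := by rw [setIntegral_const, smul_eq_mul, mul_one, measureReal_def]
        _ ≤ ∫ ω in B, min ((θ * X ω - w) ^ 2) 1 := by
            apply setIntegral_mono_on _ hminint hBmeas hpt
            exact integrableOn_const
  have hfinal : z.re ^ 2 / (45 * κ ^ 3) ≤ 1 - ‖φ‖ := by
    rw [hstep4]
    calc z.re ^ 2 / (45 * κ ^ 3) = (z.re ^ 2 / (9 * κ ^ 3)) / 5 := by ring
      _ ≤ (∫ ω in B, min ((θ * X ω - w) ^ 2) 1) / 5 :=
          div_le_div_of_nonneg_right key (by norm_num)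
      _ = ∫ ω in B, min ((θ * X ω - w) ^ 2) 1 / 5 := (integral_div _ _).symm
      _ ≤ ∫ ω, (1 - Real.cos (θ * X ω - β)) := hmono1
  have : ‖φ‖ = ‖φ‖ := rfl
  rw [hφ] at hfinal ⊢
  change ‖φ‖ ≤ _
  rw [this]
  linarith [hfinal]


lemma row_bound {κ : ℝ} (hκ : 1 ≤ κ) {n : ℕ} {ξ : Fin n → Ω → ℂ}
    (hm : ∀ j, Measurable (ξ j))
    (hind : iIndepFun ξ ℙ)
    (hc : ∀ j, Controlled κ (ξ j))
    {z : Fin n → ℂ} (hz1 : ∀ j, ‖z j‖ ≤ 1) (hz2 : 1/2 ≤ ∑ j, (z j).re ^ 2)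
    (a : ℝ) :
    ∫ ω, Real.exp (-min ((1/κ)^2 * (a + ∑ j, (z j * ξ j ω).re)^2) 1)
      ≤ 1 - (1 - Real.exp (-(1 / (90 * κ ^ 3)))) / 4 := by
  have hκ0 : (0:ℝ) < κ := lt_of_lt_of_le one_pos hκ
  set θ : ℝ := 1/κ with hθ
  set Y : Ω → ℝ := fun ω => a + ∑ j, (z j * ξ j ω).re with hY
  have hYm : Measurable Y := by
    apply Measurable.add measurable_const
    exact Finset.measurable_sum _ (fun j _ =>
      Complex.measurable_re.comp (measurable_const.mul (hm j)))
  -- the per-coordinate characteristic factors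
  set g : Fin n → Ω → ℂ := fun j ω => Complex.exp (((θ * (z j * ξ j ω).re : ℝ) : ℂ) * Complex.I)
    with hg
  have hgm : ∀ j, Measurable (g j) := by
    intro j
    apply Measurable.cexp
    exact (Complex.measurable_ofReal.comp (measurable_const.mul
      (Complex.measurable_re.comp (measurable_const.mul (hm j))))).mul measurable_const
  have hgb : ∀ j ω, ‖g j ω‖ ≤ 1 := fun j ω => (Complex.norm_exp_ofReal_mul_I _).le
  have hgind : iIndepFun g ℙ := by
    apply hind.comp (fun j (c : ℂ) => Complex.exp (((θ * (z j * c).re : ℝ) : ℂ) * Complex.I))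
    intro j
    apply Measurable.cexp
    exact (Complex.measurable_ofReal.comp (measurable_const.mul
      (Complex.measurable_re.comp (measurable_const.mul measurable_id)))).mul measurable_const
  -- the characteristic function of the row
  set C : ℂ := ∫ ω, Complex.exp (((θ * Y ω : ℝ) : ℂ) * Complex.I) with hC
  have hCeq : C = Complex.exp (((θ * a : ℝ) : ℂ) * Complex.I) * ∏ j, ∫ ω, g j ω := by
    rw [hC, ← iIndep_integral_prod_complex hgind hgm hgb Finset.univ, ← integral_const_mul]
    congr 1
    funext ω
    rw [← Complex.exp_sum, ← Complex.exp_add]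
    congr 1
    rw [hY]
    push_cast
    rw [mul_add, add_mul, Finset.mul_sum, Finset.sum_mul]
  have hCnorm : ‖C‖ ≤ Real.exp (-(1 / (90 * κ ^ 3))) := by
    have h1 : ‖C‖ = ∏ j, ‖∫ ω, g j ω‖ := by
      rw [hCeq, norm_mul,
        Complex.norm_exp_ofReal_mul_I, one_mul, norm_prod]
    have h2 : ∀ j : Fin n, ‖∫ ω, g j ω‖ ≤ 1 - (z j).re ^ 2 / (45 * κ ^ 3) := fun j =>
      coord_charfun_bound hκ (hm j) (hc j) (hz1 j)
    have h3 : ∀ j : Fin n, ‖∫ ω, g j ω‖ ≤ Real.exp (-((z j).re ^ 2 / (45 * κ ^ 3))) := by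
      intro j
      calc ‖∫ ω, g j ω‖ ≤ 1 - (z j).re ^ 2 / (45 * κ ^ 3) := h2 j
        _ ≤ Real.exp (-((z j).re ^ 2 / (45 * κ ^ 3))) := by
            linarith [Real.add_one_le_exp (-((z j).re ^ 2 / (45 * κ ^ 3)))]
    calc ‖C‖ = ∏ j, ‖∫ ω, g j ω‖ := h1
      _ ≤ ∏ j, Real.exp (-((z j).re ^ 2 / (45 * κ ^ 3))) :=
          Finset.prod_le_prod (fun j _ => norm_nonneg _) (fun j _ => h3 j)
      _ = Real.exp (∑ j, -((z j).re ^ 2 / (45 * κ ^ 3))) := (Real.exp_sum _ _).symm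
      _ ≤ Real.exp (-(1 / (90 * κ ^ 3))) := by
          apply Real.exp_le_exp.2
          have hsum : (∑ j, -((z j).re ^ 2 / (45 * κ ^ 3)))
              = -((∑ j, (z j).re ^ 2) / (45 * κ ^ 3)) := by
            rw [Finset.sum_neg_distrib, Finset.sum_div]
          rw [hsum]
          apply neg_le_neg
          calc 1 / (90 * κ ^ 3) = (1/2) / (45 * κ ^ 3) := by ring
            _ ≤ (∑ j, (z j).re ^ 2) / (45 * κ ^ 3) :=
                div_le_div_of_nonneg_right hz2 (by positivity)
  -- expectation of cos
  have hcosint : Integrable (fun ω => Real.cos (θ * Y ω)) ℙ :=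
    integrable_of_bdd (Real.measurable_cos.comp (measurable_const.mul hYm)).aestronglyMeasurable
      (fun ω => by rw [Real.norm_eq_abs]; exact Real.abs_cos_le_one _)
  have hcos : ∫ ω, Real.cos (θ * Y ω) ≤ ‖C‖ := by
    have heint : Integrable (fun ω => Complex.exp (((θ * Y ω : ℝ) : ℂ) * Complex.I)) ℙ := by
      apply integrable_of_bdd (C := 1)
      · apply Measurable.aestronglyMeasurable
        apply Measurable.cexp
        exact (Complex.measurable_ofReal.comp (measurable_const.mul hYm)).mul measurable_const
      · exact fun ω => (Complex.norm_exp_ofReal_mul_I _).le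
    have hre := Complex.reCLM.integral_comp_comm heint
    simp only [Complex.reCLM_apply] at hre
    have : ∫ ω, Real.cos (θ * Y ω) = C.re := by
      rw [hC, ← hre]
      congr 1
      funext ω
      exact (Complex.exp_ofReal_mul_I_re _).symm
    rw [this]
    exact Complex.re_le_norm C
  -- lower bound for the min moment
  set m : Ω → ℝ := fun ω => min (θ^2 * (Y ω)^2) 1 with hmdef
  have hmm : Measurable m := ((measurable_const.mul (hYm.pow_const 2)).min measurable_const)
  have hmb : ∀ ω, m ω ∈ Set.Icc (0:ℝ) 1 := by
    intro ω
    constructor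
    · exact le_min (by positivity) zero_le_one
    · exact min_le_right _ _
  have hmint : Integrable m ℙ := integrable_of_bdd hmm.aestronglyMeasurable
    (C := 1) (fun ω => by
      rw [Real.norm_eq_abs, _root_.abs_of_nonneg (hmb ω).1]
      exact (hmb ω).2)
  have hmmean : (1 - Real.exp (-(1 / (90 * κ ^ 3)))) / 2 ≤ ∫ ω, m ω := by
    have hpt : ∀ ω, 1 - Real.cos (θ * Y ω) ≤ 2 * m ω := by
      intro ω
      have := one_sub_cos_upper (θ * Y ω)
      rw [hmdef]
      simp only []
      rw [← mul_pow]
      exact this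
    have h5 : 1 - ‖C‖ ≤ ∫ ω, 2 * m ω := by
      have h6 : ∫ ω, (1 - Real.cos (θ * Y ω)) ≤ ∫ ω, 2 * m ω := by
        apply integral_mono ((integrable_const 1).sub hcosint) (hmint.const_mul 2) hpt
      have h7 : ∫ ω, (1 - Real.cos (θ * Y ω)) = 1 - ∫ ω, Real.cos (θ * Y ω) := by
        rw [integral_sub (integrable_const 1) hcosint]
        simp
      linarith [hcos]
    rw [integral_const_mul] at h5
    linarith [hCnorm]
  -- conclusion via exp(-m) ≤ 1 - m/2
  have hfinal : ∫ ω, Real.exp (-m ω) ≤ 1 - (∫ ω, m ω) / 2 := by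
    have hint : Integrable (fun ω => Real.exp (-m ω)) ℙ :=
      integrable_of_bdd (Real.measurable_exp.comp hmm.neg).aestronglyMeasurable
        (C := 1) (fun ω => by
          rw [Real.norm_eq_abs, _root_.abs_of_nonneg (Real.exp_nonneg _)]
          rw [Real.exp_le_one_iff]
          linarith [(hmb ω).1])
    calc ∫ ω, Real.exp (-m ω) ≤ ∫ ω, (1 - m ω / 2) := by
          apply integral_mono hint ((integrable_const 1).sub (hmint.div_const 2))
          intro ω
          exact exp_neg_le_one_sub_half (hmb ω).1 (hmb ω).2
      _ = 1 - (∫ ω, m ω) / 2 := by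
          rw [integral_sub (integrable_const 1) (hmint.div_const 2)]
          simp [integral_div]
  have : ∫ ω, Real.exp (-min ((1/κ)^2 * (a + ∑ j, (z j * ξ j ω).re)^2) 1)
      = ∫ ω, Real.exp (-m ω) := by
    congr 1
  calc ∫ ω, Real.exp (-min ((1/κ)^2 * (a + ∑ j, (z j * ξ j ω).re)^2) 1)
      = ∫ ω, Real.exp (-m ω) := this
    _ ≤ 1 - (∫ ω, m ω) / 2 := hfinal
    _ ≤ 1 - (1 - Real.exp (-(1 / (90 * κ ^ 3)))) / 4 := by linarith [hmmean]


lemma choose_u {n : ℕ} (v : Fin n → ℂ) (hv : ∑ j, ‖v j‖ ^ 2 = 1) :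
    ∃ u : ℂ, ‖u‖ = 1 ∧ 1/2 ≤ ∑ j, ((starRingEnd ℂ) u * v j).re ^ 2 := by
  have hsplit : (∑ j, (v j).re ^ 2) + (∑ j, (v j).im ^ 2) = 1 := by
    rw [← Finset.sum_add_distrib, ← hv]
    apply Finset.sum_congr rfl
    intro j _
    rw [Complex.sq_norm, Complex.normSq_apply]
    ring
  rcases le_or_gt (1/2) (∑ j, (v j).re ^ 2) with hre | hre
  · refine ⟨1, by norm_num, ?_⟩
    calc (1:ℝ)/2 ≤ ∑ j, (v j).re ^ 2 := hre
      _ = ∑ j, ((starRingEnd ℂ) 1 * v j).re ^ 2 := by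
          apply Finset.sum_congr rfl
          intro j _
          norm_num
  · refine ⟨Complex.I, by simp, ?_⟩
    have him : 1/2 ≤ ∑ j, (v j).im ^ 2 := by linarith
    calc (1:ℝ)/2 ≤ ∑ j, (v j).im ^ 2 := him
      _ = ∑ j, ((starRingEnd ℂ) Complex.I * v j).re ^ 2 := by
          apply Finset.sum_congr rfl
          intro j _
          simp [Complex.mul_re]


end Stmt12Aux

open Stmt12Aux in
/-- For a random matrix `N_n` with independent `κ`-controlled entries, any fixed
unit vector `v` and any deterministic matrix `M`:
`P(‖(M+N_n)v‖ ≤ c√n) ≤ exp(−c'n)`, with `c, c' > 0` depending only on `κ`. -/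
theorem stmt12 (κ : ℝ) (hκ : 1 ≤ κ) :
    ∃ c > (0 : ℝ), ∃ c' > (0 : ℝ),
      ∀ (Ω : Type) [MeasureSpace Ω], IsProbabilityMeasure (ℙ : Measure Ω) →
      ∀ (n : ℕ) (N : Ω → Matrix (Fin n) (Fin n) ℂ),
        (∀ i j, Measurable fun ω => N ω i j) →
        iIndepFun
          (fun p : Fin n × Fin n => fun ω => N ω p.1 p.2) ℙ →
        (∀ i j, Controlled κ (fun ω => N ω i j)) →
        ∀ (M : Matrix (Fin n) (Fin n) ℂ) (v : EuclideanSpace ℂ (Fin n)), ‖v‖ = 1 →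
          (ℙ {ω | ‖Matrix.toEuclideanCLM (𝕜 := ℂ) (M + N ω) v‖
              ≤ c * (n : ℝ) ^ ((1 : ℝ) / 2)}).toReal ≤ Real.exp (-c' * n) := by
  classical
  have hκ0 : (0:ℝ) < κ := lt_of_lt_of_le one_pos hκ
  set δ : ℝ := 1 - Real.exp (-(1 / (90 * κ ^ 3))) with hδ
  have hδpos : 0 < δ := by
    rw [hδ, sub_pos, Real.exp_lt_one_iff]
    have : (0:ℝ) < 1 / (90 * κ ^ 3) := by positivity
    linarith
  have hδ1 : δ ≤ 1 := by
    rw [hδ]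
    have := Real.exp_nonneg (-(1 / (90 * κ ^ 3)))
    linarith
  refine ⟨Real.sqrt (δ/8) * κ, by positivity, δ/8, by positivity, ?_⟩
  intro Ω _ hprob n N hmeas hind hcont M v hv
  rcases Nat.eq_zero_or_pos n with hn | hn
  · subst hn
    have h1 : (ℙ {ω | ‖Matrix.toEuclideanCLM (𝕜 := ℂ) (M + N ω) v‖
        ≤ Real.sqrt (δ/8) * κ * ((0:ℕ) : ℝ) ^ ((1 : ℝ) / 2)}).toReal ≤ 1 := by
      calc (ℙ _).toReal ≤ (ℙ (Set.univ : Set Ω)).toReal :=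
            ENNReal.toReal_mono (measure_ne_top _ _) (measure_mono (Set.subset_univ _))
        _ = 1 := by rw [measure_univ, ENNReal.toReal_one]
    simpa using h1
  haveI : Nonempty (Fin n) := ⟨⟨0, hn⟩⟩
  -- decomposition of the unit vector
  have hv2 : ∑ j, ‖v j‖ ^ 2 = 1 := by
    have h1 := EuclideanSpace.norm_eq v
    rw [hv] at h1
    have h3 := Real.sq_sqrt (Finset.sum_nonneg (fun j (_ : j ∈ Finset.univ) => sq_nonneg ‖v j‖))
    rw [← h1] at h3
    simpa using h3.symm
  obtain ⟨u, hu, hz2⟩ := choose_u (fun j => v j) hv2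
  set z : Fin n → ℂ := fun j => (starRingEnd ℂ) u * v j with hzdef
  have hz1 : ∀ j, ‖z j‖ ≤ 1 := by
    intro j
    have h1 : ‖v j‖ ^ 2 ≤ 1 := by
      rw [← hv2]
      exact Finset.single_le_sum (fun k (_ : k ∈ Finset.univ) => sq_nonneg ‖v k‖)
        (Finset.mem_univ j)
    have h2 : ‖z j‖ = ‖v j‖ := by
      rw [hzdef]
      simp only []
      rw [norm_mul, RCLike.norm_conj, hu, one_mul]
    rw [h2]
    nlinarith [norm_nonneg (v j)]
  -- row data
  set a : Fin n → ℝ := fun i => ((starRingEnd ℂ) u * ∑ j, M i j * v j).re with hadef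
  set F : Fin n → (Fin n → ℂ) → ℝ := fun i y =>
    Real.exp (-min ((1/κ)^2 * (a i + ∑ j, (z j * y j).re)^2) 1) with hFdef
  have hFmeas : ∀ i, Measurable (F i) := by
    intro i
    apply Measurable.exp
    apply Measurable.neg
    apply Measurable.min _ measurable_const
    apply Measurable.mul measurable_const
    apply Measurable.pow_const
    apply Measurable.add measurable_const
    exact Finset.measurable_sum _ (fun j _ =>
      Complex.measurable_re.comp (measurable_const.mul (measurable_pi_apply j)))
  set hrow : Fin n → Ω → ℝ := fun i ω => F i (fun j => N ω i j) with hrowdef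
  have hrowmeas : ∀ i, Measurable (hrow i) := fun i =>
    (hFmeas i).comp (measurable_pi_lambda _ fun j => hmeas i j)
  have hrownn : ∀ i ω, 0 ≤ hrow i ω := fun i ω => Real.exp_nonneg _
  have hrowbd : ∀ i ω, ‖hrow i ω‖ ≤ 1 := by
    intro i ω
    rw [Real.norm_eq_abs, _root_.abs_of_nonneg (hrownn i ω)]
    rw [hrowdef]
    simp only []
    rw [hFdef]
    simp only []
    rw [Real.exp_le_one_iff, neg_nonpos]
    exact le_min (by positivity) zero_le_one
  have hrowint : ∀ i, ∫ ω, hrow i ω ≤ Real.exp (-(δ/4)) := by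
    intro i
    have hri : iIndepFun (fun j => fun ω => N ω i j) ℙ := by
      have h2 := iIndepFun_precomp (f := fun p : Fin n × Fin n => fun ω => N ω p.1 p.2)
        hind (g := fun j : Fin n => (i, j))
        (fun x y hxy => by
          have := congrArg Prod.snd hxy
          exact this)
      exact h2
    have h3 := row_bound hκ (fun j => hmeas i j) hri (fun j => hcont i j) hz1 hz2 (a i)
    calc ∫ ω, hrow i ω ≤ 1 - δ/4 := h3
      _ ≤ Real.exp (-(δ/4)) := by linarith [Real.add_one_le_exp (-(δ/4))]
  -- pairwise independence of products of distinct rows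
  have hp : ∀ (s : Finset (Fin n)) (i : Fin n), i ∉ s →
      IndepFun (fun ω => ∏ j ∈ s, hrow j ω) (hrow i) ℙ := by
    intro s i his
    have hdisj : Disjoint (s ×ˢ (Finset.univ : Finset (Fin n)))
        ({i} ×ˢ (Finset.univ : Finset (Fin n))) := by
      rw [Finset.disjoint_left]
      rintro ⟨p1, p2⟩ hp1 hp2
      rw [Finset.mem_product] at hp1 hp2
      rw [Finset.mem_singleton] at hp2
      exact his (hp2.1 ▸ hp1.1)
    have hbase := hind.indepFun_finset (s ×ˢ Finset.univ) ({i} ×ˢ Finset.univ) hdisj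
      (fun p => hmeas p.1 p.2)
    set Φ : ((p : ↥(s ×ˢ (Finset.univ : Finset (Fin n)))) → ℂ) → ℝ := fun x =>
      ∏ q ∈ s.attach, F q.1
        (fun j => x ⟨(q.1, j), Finset.mem_product.2 ⟨q.2, Finset.mem_univ j⟩⟩) with hΦdef
    set Ψ : ((p : ↥(({i} : Finset (Fin n)) ×ˢ (Finset.univ : Finset (Fin n)))) → ℂ) → ℝ :=
      fun x => F i
        (fun j => x ⟨(i, j), Finset.mem_product.2 ⟨Finset.mem_singleton_self i,
          Finset.mem_univ j⟩⟩) with hΨdef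
    have hΦm : Measurable Φ := by
      apply Finset.measurable_prod
      intro q _
      exact (hFmeas q.1).comp (measurable_pi_lambda _ (fun j => measurable_pi_apply _))
    have hΨm : Measurable Ψ :=
      (hFmeas i).comp (measurable_pi_lambda _ (fun j => measurable_pi_apply _))
    have hcomp := hbase.comp hΦm hΨm
    have e1 : (Φ ∘ fun ω (p : ↥(s ×ˢ (Finset.univ : Finset (Fin n)))) =>
        N ω (p : Fin n × Fin n).1 (p : Fin n × Fin n).2) = fun ω => ∏ j ∈ s, hrow j ω := by
      funext ω
      simp only [Function.comp_apply, hΦdef]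
      rw [← Finset.prod_attach s (fun i => hrow i ω)]
    have e2 : (Ψ ∘ fun ω (p : ↥(({i} : Finset (Fin n)) ×ˢ (Finset.univ : Finset (Fin n)))) =>
        N ω (p : Fin n × Fin n).1 (p : Fin n × Fin n).2) = hrow i := by
      funext ω
      simp only [Function.comp_apply, hΨdef]
      rfl
    rw [e1, e2] at hcomp
    exact hcomp
  have hprodeq : ∫ ω, ∏ i, hrow i ω = ∏ i, ∫ ω, hrow i ω :=
    integral_prod_pairwise_real hrowmeas hrowbd hp Finset.univ
  -- the event
  set E : Set Ω := {ω | ‖Matrix.toEuclideanCLM (𝕜 := ℂ) (M + N ω) v‖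
      ≤ Real.sqrt (δ/8) * κ * (n : ℝ) ^ ((1 : ℝ) / 2)} with hEdef
  set c₀ : ℝ := δ/8 * n with hc₀def
  set E' : Set Ω := {ω | (1:ℝ) ≤ Real.exp c₀ * ∏ i, hrow i ω} with hE'def
  have hsub : E ⊆ E' := by
    intro ω hω
    rw [hEdef] at hω
    have hnorm : ‖Matrix.toEuclideanCLM (𝕜 := ℂ) (M + N ω) v‖
        ≤ Real.sqrt (δ/8) * κ * (n : ℝ) ^ ((1 : ℝ) / 2) := hω
    -- identify the coordinates
    have hcoord : ∀ i, (Matrix.toEuclideanCLM (𝕜 := ℂ) (M + N ω) v) i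
        = ∑ j, (M + N ω) i j * v j := by
      intro i
      have h4 := Matrix.ofLp_toEuclideanCLM (𝕜 := ℂ) (M + N ω) v
      have h5 := congrFun h4 i
      rw [h5]
      rfl
    have hS : ∑ i, ‖∑ j, (M + N ω) i j * v j‖ ^ 2 ≤ δ/8 * κ^2 * n := by
      have e3 : ‖Matrix.toEuclideanCLM (𝕜 := ℂ) (M + N ω) v‖
          = Real.sqrt (∑ i, ‖∑ j, (M + N ω) i j * v j‖ ^ 2) := by
        rw [EuclideanSpace.norm_eq]
        simp only [hcoord]
      rw [e3] at hnorm
      have hrpow : ((n : ℝ) ^ ((1 : ℝ) / 2)) ^ 2 = (n : ℝ) := by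
        rw [← Real.rpow_natCast ((n : ℝ) ^ ((1 : ℝ) / 2)) 2, ← Real.rpow_mul (Nat.cast_nonneg n)]
        norm_num
      have hsq := Real.sq_sqrt (Finset.sum_nonneg
        (fun i (_ : i ∈ Finset.univ) => sq_nonneg ‖∑ j, (M + N ω) i j * v j‖))
      have hRHSnn : 0 ≤ Real.sqrt (δ/8) * κ * (n : ℝ) ^ ((1 : ℝ) / 2) := by positivity
      have h6 : (Real.sqrt (∑ i, ‖∑ j, (M + N ω) i j * v j‖ ^ 2)) ^ 2
          ≤ (Real.sqrt (δ/8) * κ * (n : ℝ) ^ ((1 : ℝ) / 2)) ^ 2 := by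
        apply pow_le_pow_left₀ (Real.sqrt_nonneg _) hnorm 2
      rw [hsq] at h6
      calc ∑ i, ‖∑ j, (M + N ω) i j * v j‖ ^ 2
          ≤ (Real.sqrt (δ/8) * κ * (n : ℝ) ^ ((1 : ℝ) / 2)) ^ 2 := h6
        _ = (Real.sqrt (δ/8))^2 * κ^2 * ((n : ℝ) ^ ((1 : ℝ) / 2)) ^ 2 := by ring
        _ = δ/8 * κ^2 * n := by
            rw [Real.sq_sqrt (by positivity : (0:ℝ) ≤ δ/8), hrpow]
    -- per-row bound of the exponent
    have hYeq : ∀ i, a i + ∑ j, (z j * N ω i j).re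
        = ((starRingEnd ℂ) u * ∑ j, (M + N ω) i j * v j).re := by
      intro i
      have h7 : (starRingEnd ℂ) u * ∑ j, (M + N ω) i j * v j
          = ((starRingEnd ℂ) u * ∑ j, M i j * v j) + ∑ j, z j * N ω i j := by
        rw [Finset.mul_sum, Finset.mul_sum, ← Finset.sum_add_distrib]
        apply Finset.sum_congr rfl
        intro j _
        rw [Matrix.add_apply, hzdef]
        ring
      rw [h7, Complex.add_re, hadef]
      congr 1
      rw [Complex.re_sum]
    have hW : ∑ i, min ((1/κ)^2 * (a i + ∑ j, (z j * N ω i j).re)^2) 1 ≤ c₀ := by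
      have h8 : ∀ i, min ((1/κ)^2 * (a i + ∑ j, (z j * N ω i j).re)^2) 1
          ≤ (1/κ)^2 * ‖∑ j, (M + N ω) i j * v j‖ ^ 2 := by
        intro i
        calc min ((1/κ)^2 * (a i + ∑ j, (z j * N ω i j).re)^2) 1
            ≤ (1/κ)^2 * (a i + ∑ j, (z j * N ω i j).re)^2 := min_le_left _ _
          _ ≤ (1/κ)^2 * ‖∑ j, (M + N ω) i j * v j‖ ^ 2 := by
              apply mul_le_mul_of_nonneg_left _ (by positivity)
              rw [hYeq i]
              calc ((starRingEnd ℂ) u * ∑ j, (M + N ω) i j * v j).re ^ 2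
                  ≤ ‖(starRingEnd ℂ) u * ∑ j, (M + N ω) i j * v j‖ ^ 2 := by
                    have h9 : |((starRingEnd ℂ) u * ∑ j, (M + N ω) i j * v j).re|
                        ≤ ‖(starRingEnd ℂ) u * ∑ j, (M + N ω) i j * v j‖ :=
                      Complex.abs_re_le_norm _
                    nlinarith [abs_nonneg (((starRingEnd ℂ) u * ∑ j, (M + N ω) i j * v j).re),
                      _root_.sq_abs (((starRingEnd ℂ) u * ∑ j, (M + N ω) i j * v j).re)]
                _ = ‖∑ j, (M + N ω) i j * v j‖ ^ 2 := by
                    rw [norm_mul, RCLike.norm_conj, hu, one_mul]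
      calc ∑ i, min ((1/κ)^2 * (a i + ∑ j, (z j * N ω i j).re)^2) 1
          ≤ ∑ i, (1/κ)^2 * ‖∑ j, (M + N ω) i j * v j‖ ^ 2 :=
            Finset.sum_le_sum (fun i _ => h8 i)
        _ = (1/κ)^2 * ∑ i, ‖∑ j, (M + N ω) i j * v j‖ ^ 2 := by rw [← Finset.mul_sum]
        _ ≤ (1/κ)^2 * (δ/8 * κ^2 * n) := by
            apply mul_le_mul_of_nonneg_left hS (by positivity)
        _ = δ/8 * n := by field_simp
        _ = c₀ := rfl
    -- conclude membership in E'
    rw [hE'def]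
    show (1:ℝ) ≤ Real.exp c₀ * ∏ i, hrow i ω
    have h10 : ∏ i, hrow i ω
        = Real.exp (-∑ i, min ((1/κ)^2 * (a i + ∑ j, (z j * N ω i j).re)^2) 1) := by
      rw [hrowdef]
      simp only [hFdef]
      rw [← Real.exp_sum]
      congr 1
      rw [← Finset.sum_neg_distrib]
    rw [h10, ← Real.exp_add]
    calc (1:ℝ) = Real.exp 0 := Real.exp_zero.symm
      _ ≤ Real.exp (c₀ + -∑ i, min ((1/κ)^2 * (a i + ∑ j, (z j * N ω i j).re)^2) 1) :=
          Real.exp_le_exp.2 (by linarith [hW])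
  -- Markov
  have hprodmeas : Measurable fun ω => ∏ i, hrow i ω :=
    Finset.measurable_prod _ (fun i _ => hrowmeas i)
  have hfinmeas : Measurable fun ω => Real.exp c₀ * ∏ i, hrow i ω :=
    measurable_const.mul hprodmeas
  have hfinint : Integrable (fun ω => Real.exp c₀ * ∏ i, hrow i ω) ℙ := by
    apply integrable_of_bdd hfinmeas.aestronglyMeasurable (C := Real.exp c₀)
    intro ω
    rw [Real.norm_eq_abs, abs_mul, _root_.abs_of_nonneg (Real.exp_nonneg _),
      _root_.abs_of_nonneg (Finset.prod_nonneg (fun i _ => hrownn i ω))]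
    calc Real.exp c₀ * ∏ i, hrow i ω ≤ Real.exp c₀ * 1 := by
          apply mul_le_mul_of_nonneg_left _ (Real.exp_nonneg _)
          calc ∏ i, hrow i ω ≤ ∏ i, (1:ℝ) := by
                apply Finset.prod_le_prod (fun i _ => hrownn i ω)
                intro i _
                have := hrowbd i ω
                rwa [Real.norm_eq_abs, _root_.abs_of_nonneg (hrownn i ω)] at this
            _ = 1 := Finset.prod_const_one
      _ = Real.exp c₀ := mul_one _
  have hmarkov : (ℙ E').toReal ≤ ∫ ω, Real.exp c₀ * ∏ i, hrow i ω := by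
    have h11 := mul_meas_ge_le_integral_of_nonneg
      (f := fun ω => Real.exp c₀ * ∏ i, hrow i ω)
      (ae_of_all _ (fun ω => by positivity)) hfinint 1
    rw [one_mul] at h11
    have : E' = {ω | 1 ≤ Real.exp c₀ * ∏ i, hrow i ω} := rfl
    rw [this]
    exact h11
  have hchain : (ℙ E).toReal ≤ Real.exp (-(δ/8) * n) := by
    calc (ℙ E).toReal ≤ (ℙ E').toReal :=
          ENNReal.toReal_mono (measure_ne_top _ _) (measure_mono hsub)
      _ ≤ ∫ ω, Real.exp c₀ * ∏ i, hrow i ω := hmarkov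
      _ = Real.exp c₀ * ∫ ω, ∏ i, hrow i ω := integral_const_mul _ _
      _ = Real.exp c₀ * ∏ i, ∫ ω, hrow i ω := by rw [hprodeq]
      _ ≤ Real.exp c₀ * ∏ (_i : Fin n), Real.exp (-(δ/4)) := by
          apply mul_le_mul_of_nonneg_left _ (Real.exp_nonneg _)
          apply Finset.prod_le_prod (fun i _ => integral_nonneg (fun ω => hrownn i ω))
          intro i _
          exact hrowint i
      _ = Real.exp c₀ * Real.exp (-(δ/4)) ^ n := by rw [Finset.prod_const, Finset.card_univ,
          Fintype.card_fin]
      _ = Real.exp (c₀ + n * (-(δ/4))) := by rw [← Real.exp_nat_mul, ← Real.exp_add]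
      _ = Real.exp (-(δ/8) * n) := by
          congr 1
          rw [hc₀def]
          ring
  exact hchain
end

section
/- (Moment bound for linear forms) Let γ ≥ 1/2 and let α'_1,...,α'_n be independent complex random variables with E α'_i = 0, E|α'_i|² = O(1), and E|α'_i|^j = O_j(n^{(j−2)γ}) for each j > 2. Then for every integer k ≥ 0 and every vector w = (w_1,...,w_n) with ‖w‖_∞ ≤ 1, E|w_1 α'_1 + ... + w_n α'_n|^{2k} = O_k(n^{2kγ}). -/
open MeasureTheory ProbabilityTheory Complex

variable {Ω : Type} [MeasureSpace Ω]

lemma aux_integral_mul_indep [IsProbabilityMeasure (ℙ : Measure Ω)]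
    {X Y : Ω → ℂ} (hX : Measurable X) (hY : Measurable Y)
    (h : IndepFun X Y ℙ) :
    ∫ ω, X ω * Y ω = (∫ ω, X ω) * ∫ ω, Y ω := by
  have hmap : (ℙ : Measure Ω).map (fun ω => (X ω, Y ω))
      = ((ℙ : Measure Ω).map X).prod ((ℙ : Measure Ω).map Y) :=
    (indepFun_iff_map_prod_eq_prod_map_map hX.aemeasurable hY.aemeasurable).mp h
  have h1 : ∫ ω, X ω * Y ω
      = ∫ p : ℂ × ℂ, p.1 * p.2 ∂((ℙ : Measure Ω).map (fun ω => (X ω, Y ω))) := by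
    rw [integral_map (f := fun p : ℂ × ℂ => p.1 * p.2) (hX.prodMk hY).aemeasurable
      (measurable_fst.mul measurable_snd).aestronglyMeasurable]
  rw [h1, hmap, integral_prod_mul (fun x : ℂ => x) (fun y : ℂ => y)]
  rw [show (∫ x : ℂ, x ∂((ℙ : Measure Ω).map X)) = ∫ ω, X ω from
      integral_map hX.aemeasurable measurable_id.aestronglyMeasurable,
    show (∫ y : ℂ, y ∂((ℙ : Measure Ω).map Y)) = ∫ ω, Y ω from
      integral_map hY.aemeasurable measurable_id.aestronglyMeasurable]

lemma aux_integral_prod_indep [IsProbabilityMeasure (ℙ : Measure Ω)]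
    {n : ℕ} {δ : Fin n → Ω → ℂ} (hmeas : ∀ i, Measurable (δ i))
    (hind : iIndepFun δ ℙ) (s : Finset (Fin n)) :
    ∫ ω, ∏ i ∈ s, δ i ω = ∏ i ∈ s, ∫ ω, δ i ω := by
  classical
  induction s using Finset.cons_induction with
  | empty => simp
  | cons a s ha ih =>
    have hprod : Measurable (fun ω => ∏ i ∈ s, δ i ω) :=
      Finset.measurable_prod _ (fun i _ => hmeas i)
    have hindep : IndepFun (δ a) (fun ω => ∏ i ∈ s, δ i ω) ℙ := by
      have h2 := (hind.indepFun_finsetProd_of_notMem hmeas ha).symm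
      have : (∏ j ∈ s, δ j) = fun ω => ∏ i ∈ s, δ i ω := by
        funext ω; simp [Finset.prod_apply]
      rwa [this] at h2
    simp only [Finset.prod_cons]
    rw [aux_integral_mul_indep (hmeas a) hprod hindep, ih]

lemma aux_integrable_of_indep_add [IsProbabilityMeasure (ℙ : Measure Ω)]
    {X Y : Ω → ℂ} (hX : Measurable X) (hY : Measurable Y) (h : IndepFun X Y ℙ)
    {m : ℕ} (hint : Integrable (fun ω => ‖X ω + Y ω‖ ^ m) ℙ) :
    Integrable (fun ω => ‖X ω‖ ^ m) ℙ := by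
  have hmap : (ℙ : Measure Ω).map (fun ω => (X ω, Y ω))
      = ((ℙ : Measure Ω).map X).prod ((ℙ : Measure Ω).map Y) :=
    (indepFun_iff_map_prod_eq_prod_map_map hX.aemeasurable hY.aemeasurable).mp h
  have hmeasf : Measurable (fun p : ℂ × ℂ => ‖p.1 + p.2‖ ^ m) :=
    (measurable_fst.add measurable_snd).norm.pow_const m
  have hf : Integrable (fun p : ℂ × ℂ => ‖p.1 + p.2‖ ^ m)
      (((ℙ : Measure Ω).map X).prod ((ℙ : Measure Ω).map Y)) := by
    rw [← hmap, integrable_map_measure hmeasf.aestronglyMeasurable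
      (hX.prodMk hY).aemeasurable]
    exact hint
  have hPY : IsProbabilityMeasure ((ℙ : Measure Ω).map Y) :=
    Measure.isProbabilityMeasure_map hY.aemeasurable
  obtain ⟨y0, hy0⟩ := hf.prod_left_ae.exists
  have hid : Integrable (fun x : ℂ => ‖x‖ ^ m) ((ℙ : Measure Ω).map X) := by
    have hPX : IsProbabilityMeasure ((ℙ : Measure Ω).map X) :=
      Measure.isProbabilityMeasure_map hX.aemeasurable
    have hdom : Integrable (fun x : ℂ => 2 ^ m * (‖x + y0‖ ^ m + ‖y0‖ ^ m))
        ((ℙ : Measure Ω).map X) := (hy0.add (integrable_const _)).const_mul _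
    refine hdom.mono' (measurable_norm.pow_const m).aestronglyMeasurable ?_
    refine Filter.Eventually.of_forall fun x => ?_
    have h1 : ‖x‖ ≤ ‖x + y0‖ + ‖y0‖ := by
      calc ‖x‖ = ‖x + y0 + (-y0)‖ := by ring_nf
      _ ≤ ‖x + y0‖ + ‖-y0‖ := norm_add_le _ _
      _ = ‖x + y0‖ + ‖y0‖ := by rw [norm_neg]
    have h2 : ‖x‖ ^ m ≤ (‖x + y0‖ + ‖y0‖) ^ m :=
      pow_le_pow_left₀ (norm_nonneg _) h1 m
    have h3 : (‖x + y0‖ + ‖y0‖) ^ m ≤ 2 ^ m * (‖x + y0‖ ^ m + ‖y0‖ ^ m) := by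
      set a := ‖x + y0‖; set b := ‖y0‖
      have ha : (0:ℝ) ≤ a := norm_nonneg _
      have hb : (0:ℝ) ≤ b := norm_nonneg _
      have hab : a + b ≤ 2 * max a b := by
        rcases le_total a b with hle | hle
        · rw [max_eq_right hle]; linarith
        · rw [max_eq_left hle]; linarith
      calc (a + b) ^ m ≤ (2 * max a b) ^ m :=
            pow_le_pow_left₀ (by linarith) hab m
      _ = 2 ^ m * (max a b) ^ m := mul_pow _ _ _
      _ ≤ 2 ^ m * (a ^ m + b ^ m) := by
          apply mul_le_mul_of_nonneg_left _ (by positivity)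
          rcases le_total a b with hle | hle
          · rw [max_eq_right hle]
            have := pow_nonneg ha m; nlinarith [pow_le_pow_left₀ ha hle m]
          · rw [max_eq_left hle]
            have := pow_nonneg hb m; nlinarith [pow_le_pow_left₀ hb hle m]
      _ = _ := rfl
    calc ‖‖x‖ ^ m‖ = ‖x‖ ^ m := by
          rw [Real.norm_eq_abs, _root_.abs_of_nonneg (pow_nonneg (norm_nonneg _) m)]
    _ ≤ 2 ^ m * (‖x + y0‖ ^ m + ‖y0‖ ^ m) := le_trans h2 h3
  rw [integrable_map_measure (measurable_norm.pow_const m).aestronglyMeasurable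
    hX.aemeasurable] at hid
  exact hid

lemma aux_group {n k : ℕ} (f : Fin n → ℂ) (p : Fin k → Fin n) :
    ∏ t, f (p t) = ∏ i, f i ^ (Finset.univ.filter fun t => p t = i).card := by
  classical
  rw [← Finset.prod_fiberwise_of_maps_to (g := p) (t := Finset.univ)
      (fun t _ => Finset.mem_univ _) (fun t => f (p t))]
  refine Finset.prod_congr rfl fun i _ => ?_
  rw [Finset.prod_congr rfl (fun t ht => by rw [(Finset.mem_filter.mp ht).2] :
      ∀ t ∈ Finset.univ.filter fun t => p t = i, f (p t) = f i), Finset.prod_const]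

lemma aux_rpow_prod {ι : Type*} (s : Finset ι) {x : ℝ} (hx : 0 < x) (e : ι → ℝ) :
    ∏ i ∈ s, x ^ (e i) = x ^ (∑ i ∈ s, e i) := by
  classical
  induction s using Finset.cons_induction with
  | empty => simp
  | cons a s ha ih => rw [Finset.prod_cons, Finset.sum_cons, ih, ← Real.rpow_add hx]

lemma aux_pow_le_one_add {x : ℝ} (hx : 0 ≤ x) {m M : ℕ} (h : m ≤ M) :
    x ^ m ≤ 1 + x ^ M := by
  rcases le_total x 1 with h1 | h1
  · have h2 : x ^ m ≤ 1 := pow_le_one₀ hx h1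
    nlinarith [pow_nonneg hx M]
  · have h2 : x ^ m ≤ x ^ M := pow_le_pow_right₀ h1 h
    nlinarith [pow_nonneg hx m]


set_option maxHeartbeats 1000000 in
/-- Moment bound for linear forms: if `α'₁,…,α'ₙ` are independent, mean zero,
with `E|α'_i|² ≤ K` and `E|α'_i|^j ≤ C_j n^{(j−2)γ}` for `j > 2`, then for each
`k` there is a constant `C'_k` (depending only on `k, K, C`) with
`E|∑ w_i α'_i|^{2k} ≤ C'_k n^{2kγ}` whenever `‖w‖_∞ ≤ 1`. -/
theorem stmt14 (γ : ℝ) (hγ : 1 / 2 ≤ γ) (K : ℝ) (C : ℕ → ℝ) (k : ℕ) :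
    ∃ Ck : ℝ,
      ∀ (Ω : Type) [MeasureSpace Ω], IsProbabilityMeasure (ℙ : Measure Ω) →
      ∀ (n : ℕ) (α : Fin n → Ω → ℂ),
        (∀ i, Measurable (α i)) →
        iIndepFun α ℙ →
        (∀ i, (∫ ω, α i ω) = 0) →
        (∀ i, (∫ ω, ‖α i ω‖ ^ 2) ≤ K) →
        (∀ i, ∀ j : ℕ, 2 < j →
          (∫ ω, ‖α i ω‖ ^ j) ≤ C j * (n : ℝ) ^ (((j : ℝ) - 2) * γ)) →
        ∀ w : Fin n → ℂ, (∀ i, ‖w i‖ ≤ 1) →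
          (∫ ω, ‖∑ i, w i * α i ω‖ ^ (2 * k)) ≤ Ck * (n : ℝ) ^ (2 * (k : ℝ) * γ) := by
  classical
  set D : ℝ := max 1 (max K (∑ j ∈ Finset.range (2 * k + 1), |C j|)) with hDdef
  have hD1 : (1 : ℝ) ≤ D := le_max_left _ _
  have hKD : K ≤ D := le_trans (le_max_left _ _) (le_max_right _ _)
  have hCD : ∀ j ≤ 2 * k, C j ≤ D := by
    intro j hj
    refine le_trans ?_ (le_trans (le_max_right _ _) (le_max_right 1 _))
    refine le_trans (le_abs_self _) ?_
    exact Finset.single_le_sum (f := fun j => |C j|) (fun _ _ => abs_nonneg _)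
      (Finset.mem_range.mpr (by omega))
  refine ⟨((k : ℝ) + 1) * (k : ℝ) ^ (2 * k) * D ^ k + 1, ?_⟩
  intro Ω _ hP n α hmeas hind hmean h2mom hjmom w hw
  have hCk0 : (0 : ℝ) ≤ ((k : ℝ) + 1) * (k : ℝ) ^ (2 * k) * D ^ k + 1 := by positivity
  have hrpow0 : (0 : ℝ) ≤ (n : ℝ) ^ (2 * (k : ℝ) * γ) := Real.rpow_nonneg (Nat.cast_nonneg n) _
  -- trivial case k = 0
  rcases Nat.eq_zero_or_pos k with hk0 | hkpos
  · subst hk0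
    simp only [Nat.mul_zero, pow_zero, Nat.cast_zero, mul_zero, zero_mul, Real.rpow_zero]
    rw [integral_const]
    simp [hP.measure_univ]
  -- trivial case n = 0
  rcases Nat.eq_zero_or_pos n with hn0 | hnpos
  · subst hn0
    have : (fun ω : Ω => ‖∑ i : Fin 0, w i * α i ω‖ ^ (2 * k)) = fun _ => 0 := by
      funext ω
      simp [Finset.univ_eq_empty, zero_pow (by omega : 2 * k ≠ 0)]
    rw [this, integral_zero]
    positivity
  have hn1 : (1 : ℝ) ≤ (n : ℝ) := by exact_mod_cast hnpos
  have hnposR : (0 : ℝ) < (n : ℝ) := by linarith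
  set β : Fin n → Ω → ℂ := fun i ω => w i * α i ω with hβdef
  have hβmeas : ∀ i, Measurable (β i) := fun i => (hmeas i).const_mul _
  have hβind : iIndepFun β ℙ := by
    have := hind.comp (fun i (z : ℂ) => w i * z) (fun i => measurable_const_mul _)
    exact this
  set S : Ω → ℂ := fun ω => ∑ i, β i ω with hSdef
  have hSmeas : Measurable S := Finset.measurable_sum _ (fun i _ => hβmeas i)
  have hgoal_eq : (fun ω => ‖∑ i, w i * α i ω‖ ^ (2 * k)) = fun ω => ‖S ω‖ ^ (2 * k) := rfl
  rw [show (∫ ω, ‖∑ i, w i * α i ω‖ ^ (2 * k)) = ∫ ω, ‖S ω‖ ^ (2 * k) from rfl]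
  by_cases hInt : Integrable (fun ω => ‖S ω‖ ^ (2 * k)) ℙ
  swap
  · rw [integral_undef hInt]; positivity
  -- Step C : each summand has finite 2k-th moment
  have hβk : ∀ i, Integrable (fun ω => ‖β i ω‖ ^ (2 * k)) ℙ := by
    intro i
    have hT : Measurable (fun ω => ∑ j ∈ Finset.univ.erase i, β j ω) :=
      Finset.measurable_sum _ (fun j _ => hβmeas j)
    have hindXT : IndepFun (β i) (fun ω => ∑ j ∈ Finset.univ.erase i, β j ω) ℙ := by
      have h2 := (hβind.indepFun_finsetSum_of_notMem hβmeas
        (Finset.notMem_erase i Finset.univ)).symm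
      have heq : (∑ j ∈ Finset.univ.erase i, β j)
          = fun ω => ∑ j ∈ Finset.univ.erase i, β j ω := by
        funext ω; simp [Finset.sum_apply]
      rwa [heq] at h2
    apply aux_integrable_of_indep_add (hβmeas i) hT hindXT
    have heq2 : (fun ω => ‖β i ω + ∑ j ∈ Finset.univ.erase i, β j ω‖ ^ (2 * k))
        = fun ω => ‖S ω‖ ^ (2 * k) := by
      funext ω
      rw [show β i ω + ∑ j ∈ Finset.univ.erase i, β j ω = S ω from
        Finset.add_sum_erase _ (fun j => β j ω) (Finset.mem_univ i)]
    rw [heq2]; exact hInt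
  -- integrability of lower moments
  have hβm : ∀ (i : Fin n) (m : ℕ), m ≤ 2 * k → Integrable (fun ω => ‖β i ω‖ ^ m) ℙ := by
    intro i m hm
    have hdom : Integrable (fun ω => 1 + ‖β i ω‖ ^ (2 * k)) ℙ := (integrable_const 1).add (hβk i)
    refine hdom.mono' ((hβmeas i).norm.pow_const m).aestronglyMeasurable ?_
    refine Filter.Eventually.of_forall fun ω => ?_
    rw [Real.norm_eq_abs, _root_.abs_of_nonneg (by positivity)]
    exact aux_pow_le_one_add (norm_nonneg _) hm
  -- mean zero
  have hβmean : ∀ i, (∫ ω, β i ω) = 0 := by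
    intro i
    rw [hβdef]
    simp only
    rw [integral_const_mul, hmean i, mul_zero]
  -- moment bounds
  have hβmom : ∀ (i : Fin n) (m : ℕ), 2 ≤ m → m ≤ 2 * k →
      (∫ ω, ‖β i ω‖ ^ m) ≤ D * (n : ℝ) ^ (((m : ℝ) - 2) * γ) := by
    intro i m hm2 hmk
    rcases eq_or_ne (w i) 0 with hwi | hwi
    · have hz : (fun ω => ‖β i ω‖ ^ m) = fun _ => (0 : ℝ) := by
        funext ω
        rw [hβdef]
        simp [hwi, zero_pow (by omega : m ≠ 0)]
      rw [hz, integral_zero]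
      positivity
    · have hnormβ : ∀ ω, ‖β i ω‖ ^ m = ‖w i‖ ^ m * ‖α i ω‖ ^ m := by
        intro ω
        rw [hβdef]
        simp only
        rw [norm_mul, mul_pow]
      have hwn : 0 < ‖w i‖ := norm_pos_iff.mpr hwi
      have hwpos : 0 < ‖w i‖ ^ m := pow_pos hwn m
      have hαint : Integrable (fun ω => ‖α i ω‖ ^ m) ℙ := by
        have h1 := (hβm i m hmk).const_mul ((‖w i‖ ^ m)⁻¹)
        refine h1.congr (Filter.Eventually.of_forall fun ω => ?_)
        show (‖w i‖ ^ m)⁻¹ * ‖β i ω‖ ^ m = ‖α i ω‖ ^ m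
        rw [hnormβ ω]
        rw [inv_mul_cancel_left₀ (ne_of_gt hwpos)]
      have hαnn : (0 : ℝ) ≤ ∫ ω, ‖α i ω‖ ^ m :=
        integral_nonneg fun ω => by positivity
      have hstep : (∫ ω, ‖β i ω‖ ^ m) ≤ ∫ ω, ‖α i ω‖ ^ m := by
        calc (∫ ω, ‖β i ω‖ ^ m) = ‖w i‖ ^ m * ∫ ω, ‖α i ω‖ ^ m := by
              simp_rw [hnormβ]
              exact integral_const_mul _ _
        _ ≤ 1 * ∫ ω, ‖α i ω‖ ^ m :=
              mul_le_mul_of_nonneg_right (pow_le_one₀ (norm_nonneg _) (hw i)) hαnn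
        _ = _ := one_mul _
      refine le_trans hstep ?_
      rcases eq_or_lt_of_le hm2 with h2 | h2
      · subst m
        have he : (((2 : ℕ) : ℝ) - 2) * γ = 0 := by norm_num
        rw [he, Real.rpow_zero, mul_one]
        exact le_trans (h2mom i) hKD
      · refine le_trans (hjmom i m h2) ?_
        exact mul_le_mul_of_nonneg_right (hCD m hmk) (Real.rpow_nonneg hnposR.le _)
  -- fiber counts
  set cp : (Fin k → Fin n) → Fin n → ℕ :=
    fun p i => (Finset.univ.filter fun t => p t = i).card with hcpdef
  have hcp_le : ∀ (p : Fin k → Fin n) i, cp p i ≤ k := by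
    intro p i
    calc cp p i ≤ (Finset.univ : Finset (Fin k)).card := Finset.card_filter_le _ _
    _ = k := by simp
  have hcp_sum : ∀ p : Fin k → Fin n, ∑ i, cp p i = k := by
    intro p
    have h1 := Finset.card_eq_sum_card_fiberwise
      (f := p) (s := Finset.univ) (t := Finset.univ) (fun x _ => Finset.mem_univ _)
    simpa using h1.symm
  have hcp_zero : ∀ (p : Fin k → Fin n) i, i ∉ Finset.univ.image p → cp p i = 0 := by
    intro p i hi
    rw [hcpdef]
    simp only [Finset.card_eq_zero, Finset.filter_eq_empty_iff]
    intro t _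
    exact fun h => hi (Finset.mem_image.mpr ⟨t, Finset.mem_univ t, h⟩)
  have hcp_pos : ∀ (p : Fin k → Fin n) i, i ∈ Finset.univ.image p → 1 ≤ cp p i := by
    intro p i hi
    obtain ⟨t, _, ht⟩ := Finset.mem_image.mp hi
    exact Finset.card_pos.mpr ⟨t, Finset.mem_filter.mpr ⟨Finset.mem_univ t, ht⟩⟩
  set T : (Fin k → Fin n) → (Fin k → Fin n) → Ω → ℂ :=
    fun p q ω => (∏ t, β (p t) ω) * ∏ t, (starRingEnd ℂ) (β (q t) ω) with hTdef
  set F : (Fin k → Fin n) → (Fin k → Fin n) → Fin n → ℂ :=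
    fun p q i => ∫ ω, (β i ω) ^ (cp p i) * ((starRingEnd ℂ) (β i ω)) ^ (cp q i) with hFdef
  -- pointwise expansion
  have hexp : ∀ ω, ((‖S ω‖ ^ (2 * k) : ℝ) : ℂ)
      = ∑ p : Fin k → Fin n, ∑ q : Fin k → Fin n, T p q ω := by
    intro ω
    have h1 : S ω ^ k * ((starRingEnd ℂ) (S ω)) ^ k = ((‖S ω‖ ^ (2 * k) : ℝ) : ℂ) := by
      rw [← mul_pow, Complex.mul_conj, ← Complex.ofReal_pow]
      congr 1
      rw [Complex.normSq_eq_norm_sq, ← pow_mul]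
    have h2 : S ω ^ k = ∑ p : Fin k → Fin n, ∏ t, β (p t) ω := by
      have hc : S ω ^ k = ∏ _t : Fin k, S ω := by
        rw [Finset.prod_const, Finset.card_univ, Fintype.card_fin]
      rw [hc]
      have : ∏ _t : Fin k, S ω = ∏ _t : Fin k, ∑ i, β i ω := rfl
      rw [this, Finset.prod_univ_sum]
      rw [Fintype.piFinset_univ]
    have h3 : ((starRingEnd ℂ) (S ω)) ^ k
        = ∑ q : Fin k → Fin n, ∏ t, (starRingEnd ℂ) (β (q t) ω) := by
      have hc : ((starRingEnd ℂ) (S ω)) ^ k = ∏ _t : Fin k, (starRingEnd ℂ) (S ω) := by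
        rw [Finset.prod_const, Finset.card_univ, Fintype.card_fin]
      have hconj : (starRingEnd ℂ) (S ω) = ∑ i, (starRingEnd ℂ) (β i ω) := by
        rw [hSdef]; exact map_sum _ _ _
      rw [hc, hconj, Finset.prod_univ_sum, Fintype.piFinset_univ]
    rw [← h1, h2, h3, Finset.sum_mul_sum]
  -- integrability of each term
  have hnonempty : Nonempty (Fin n) := ⟨⟨0, hnpos⟩⟩
  have hTint : ∀ p q : Fin k → Fin n, Integrable (T p q) ℙ := by
    intro p q
    have hdom : Integrable (fun ω => ∑ i, ‖β i ω‖ ^ (2 * k)) ℙ :=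
      integrable_finset_sum _ (fun i _ => hβk i)
    refine hdom.mono' ?_ (Filter.Eventually.of_forall fun ω => ?_)
    · exact ((Finset.measurable_prod _ fun t _ => hβmeas (p t)).mul
        (Finset.measurable_prod _ fun t _ =>
          Complex.continuous_conj.measurable.comp (hβmeas (q t)))).aestronglyMeasurable
    · have hne : (Finset.univ : Finset (Fin n)).Nonempty := Finset.univ_nonempty
      set M := Finset.univ.sup' hne fun i => ‖β i ω‖ with hMdef
      have hM0 : ∀ j, ‖β j ω‖ ≤ M := fun j => by
        rw [hMdef]
        exact Finset.le_sup' (fun i => ‖β i ω‖) (Finset.mem_univ j)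
      have hb1 : ∏ t, ‖β (p t) ω‖ ≤ M ^ k := by
        calc ∏ t, ‖β (p t) ω‖ ≤ ∏ _t : Fin k, M :=
            Finset.prod_le_prod (fun t _ => norm_nonneg _) (fun t _ => hM0 (p t))
        _ = M ^ k := by rw [Finset.prod_const, Finset.card_univ, Fintype.card_fin]
      have hb2 : ∏ t, ‖(starRingEnd ℂ) (β (q t) ω)‖ ≤ M ^ k := by
        calc ∏ t, ‖(starRingEnd ℂ) (β (q t) ω)‖ ≤ ∏ _t : Fin k, M :=
            Finset.prod_le_prod (fun t _ => norm_nonneg _)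
              (fun t _ => le_trans (le_of_eq (RCLike.norm_conj _)) (hM0 (q t)))
        _ = M ^ k := by rw [Finset.prod_const, Finset.card_univ, Fintype.card_fin]
      have hMnn : 0 ≤ M := le_trans (norm_nonneg _) (hM0 (Classical.arbitrary _))
      obtain ⟨j0, _, hj0⟩ := Finset.exists_mem_eq_sup' hne fun i => ‖β i ω‖
      calc ‖T p q ω‖ = (∏ t, ‖β (p t) ω‖) * ∏ t, ‖(starRingEnd ℂ) (β (q t) ω)‖ := by
            rw [hTdef]; simp only [norm_mul, norm_prod]
      _ ≤ M ^ k * M ^ k := by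
            refine mul_le_mul hb1 hb2 (Finset.prod_nonneg fun t _ => norm_nonneg _) ?_
            exact pow_nonneg hMnn k
      _ = M ^ (2 * k) := by rw [← pow_add, two_mul]
      _ = ‖β j0 ω‖ ^ (2 * k) := by rw [hMdef, hj0]
      _ ≤ ∑ i, ‖β i ω‖ ^ (2 * k) :=
            Finset.single_le_sum (f := fun i => ‖β i ω‖ ^ (2 * k))
              (fun i _ => by positivity) (Finset.mem_univ j0)
  -- factorization of the integral of each term
  have hTfact : ∀ p q : Fin k → Fin n, (∫ ω, T p q ω) = ∏ i, F p q i := by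
    intro p q
    have hδmeas : ∀ i, Measurable
        (fun ω => (β i ω) ^ (cp p i) * ((starRingEnd ℂ) (β i ω)) ^ (cp q i)) :=
      fun i => ((hβmeas i).pow_const _).mul
        ((Complex.continuous_conj.measurable.comp (hβmeas i)).pow_const _)
    have hδind : iIndepFun
        (fun i ω => (β i ω) ^ (cp p i) * ((starRingEnd ℂ) (β i ω)) ^ (cp q i)) ℙ := by
      have := hβind.comp (fun i (z : ℂ) => z ^ (cp p i) * ((starRingEnd ℂ) z) ^ (cp q i))
        (fun i => (measurable_id.pow_const _).mul
          (Complex.continuous_conj.measurable.pow_const _))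
      exact this
    have heq : T p q = fun ω => ∏ i,
        (β i ω) ^ (cp p i) * ((starRingEnd ℂ) (β i ω)) ^ (cp q i) := by
      funext ω
      rw [hTdef]
      simp only
      rw [aux_group (fun i => β i ω) p, aux_group (fun i => (starRingEnd ℂ) (β i ω)) q,
        ← Finset.prod_mul_distrib]
    rw [heq, aux_integral_prod_indep hδmeas hδind Finset.univ]
  -- factor values/bounds
  have hF1 : ∀ (p q : Fin k → Fin n) i, cp p i = 0 → cp q i = 0 → F p q i = 1 := by
    intro p q i h1 h2
    rw [hFdef]
    simp only [h1, h2, pow_zero, one_mul]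
    simp [hP.measure_univ]
  have hF0 : ∀ (p q : Fin k → Fin n) i, cp p i + cp q i = 1 → F p q i = 0 := by
    intro p q i h
    rcases Nat.add_eq_one_iff.mp h with ⟨h1, h2⟩ | ⟨h1, h2⟩
    · rw [hFdef]
      simp only [h1, h2, pow_zero, pow_one, one_mul]
      rw [integral_conj, hβmean i, map_zero]
    · rw [hFdef]
      simp only [h1, h2, pow_zero, pow_one, mul_one]
      exact hβmean i
  have hF2 : ∀ (p q : Fin k → Fin n) i, 2 ≤ cp p i + cp q i →
      ‖F p q i‖ ≤ D * (n : ℝ) ^ ((((cp p i + cp q i : ℕ) : ℝ) - 2) * γ) := by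
    intro p q i h2
    have hle : cp p i + cp q i ≤ 2 * k := by
      have hp1 := hcp_le p i; have hq1 := hcp_le q i; omega
    calc ‖F p q i‖ ≤ ∫ ω, ‖(β i ω) ^ (cp p i) * ((starRingEnd ℂ) (β i ω)) ^ (cp q i)‖ :=
          norm_integral_le_integral_norm _
    _ = ∫ ω, ‖β i ω‖ ^ (cp p i + cp q i) := by
          congr 1; funext ω
          rw [norm_mul, norm_pow, norm_pow, RCLike.norm_conj, ← pow_add]
    _ ≤ _ := hβmom i _ h2 hle
  -- key identity and triangle inequality
  have hTsum_int : ∀ p : Fin k → Fin n,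
      Integrable (fun ω => ∑ q : Fin k → Fin n, T p q ω) ℙ :=
    fun p => integrable_finset_sum _ (fun q _ => hTint p q)
  have hFint : Integrable (fun ω => ∑ p : Fin k → Fin n, ∑ q : Fin k → Fin n, T p q ω) ℙ :=
    integrable_finset_sum _ (fun p _ => hTsum_int p)
  have hsplit : (∫ ω, ∑ p : Fin k → Fin n, ∑ q : Fin k → Fin n, T p q ω)
      = ∑ p : Fin k → Fin n, ∑ q : Fin k → Fin n, ∫ ω, T p q ω := by
    rw [integral_finset_sum _ (fun p _ => hTsum_int p)]
    exact Finset.sum_congr rfl fun p _ => integral_finset_sum _ (fun q _ => hTint p q)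
  have hre : (∫ ω, ‖S ω‖ ^ (2 * k))
      ≤ ∑ p : Fin k → Fin n, ∑ q : Fin k → Fin n, ‖∫ ω, T p q ω‖ := by
    calc (∫ ω, ‖S ω‖ ^ (2 * k))
        = ∫ ω, RCLike.re (∑ p : Fin k → Fin n, ∑ q : Fin k → Fin n, T p q ω) := by
          congr 1; funext ω
          rw [← hexp ω]
          simp [← Complex.ofReal_pow]
    _ = RCLike.re (∫ ω, ∑ p : Fin k → Fin n, ∑ q : Fin k → Fin n, T p q ω) :=
        integral_re hFint
    _ ≤ ‖∫ ω, ∑ p : Fin k → Fin n, ∑ q : Fin k → Fin n, T p q ω‖ := RCLike.re_le_norm _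
    _ = ‖∑ p : Fin k → Fin n, ∑ q : Fin k → Fin n, ∫ ω, T p q ω‖ := by rw [hsplit]
    _ ≤ ∑ p : Fin k → Fin n, ‖∑ q : Fin k → Fin n, ∫ ω, T p q ω‖ := norm_sum_le _ _
    _ ≤ ∑ p : Fin k → Fin n, ∑ q : Fin k → Fin n, ‖∫ ω, T p q ω‖ :=
        Finset.sum_le_sum fun p _ => norm_sum_le _ _
  -- counting setup
  set A : (Fin k → Fin n) × (Fin k → Fin n) → Finset (Fin n) :=
    fun x => (Finset.univ.image x.1) ∪ (Finset.univ.image x.2) with hAdef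
  set good : Finset ((Fin k → Fin n) × (Fin k → Fin n)) :=
    Finset.univ.filter (fun x => ∀ i, cp x.1 i + cp x.2 i ≠ 1) with hgooddef
  have hAk : ∀ x ∈ good, (A x).card ≤ k ∧
      ‖∫ ω, T x.1 x.2 ω‖ ≤ D ^ k *
        ((n : ℝ) ^ (2 * (k : ℝ) * γ) * (n : ℝ) ^ (-((A x).card : ℝ))) := by
    intro x hx
    have hxgood : ∀ i, cp x.1 i + cp x.2 i ≠ 1 := (Finset.mem_filter.mp hx).2
    have hsupp : ∀ i, i ∉ A x → cp x.1 i + cp x.2 i = 0 := by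
      intro i hi
      rw [hAdef] at hi
      simp only [Finset.mem_union, not_or] at hi
      rw [hcp_zero _ _ hi.1, hcp_zero _ _ hi.2]
    have hge2 : ∀ i ∈ A x, 2 ≤ cp x.1 i + cp x.2 i := by
      intro i hi
      have h1 : 1 ≤ cp x.1 i + cp x.2 i := by
        rw [hAdef] at hi
        rcases Finset.mem_union.mp hi with h | h
        · exact le_trans (hcp_pos _ _ h) (Nat.le_add_right _ _)
        · exact le_trans (hcp_pos _ _ h) (Nat.le_add_left _ _)
      have h2 := hxgood i
      omega
    have hmsum : ∑ i ∈ A x, (cp x.1 i + cp x.2 i) = 2 * k := by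
      rw [Finset.sum_subset (Finset.subset_univ (A x))
        (fun i _ hi => hsupp i hi)]
      rw [Finset.sum_add_distrib, hcp_sum, hcp_sum]
      omega
    have hrk : (A x).card ≤ k := by
      have h1 : 2 * (A x).card ≤ ∑ i ∈ A x, (cp x.1 i + cp x.2 i) := by
        calc 2 * (A x).card = ∑ _i ∈ A x, 2 := by
              rw [Finset.sum_const, smul_eq_mul]; ring
        _ ≤ _ := Finset.sum_le_sum hge2
      omega
    refine ⟨hrk, ?_⟩
    have hnormT : ‖∫ ω, T x.1 x.2 ω‖ = ∏ i ∈ A x, ‖F x.1 x.2 i‖ := by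
      rw [hTfact, norm_prod]
      refine (Finset.prod_subset (Finset.subset_univ (A x)) fun i _ hi => ?_).symm
      have h0 := hsupp i hi
      rw [hF1 _ _ i (by omega) (by omega), norm_one]
    rw [hnormT]
    have hexpeq : ∑ i ∈ A x, ((((cp x.1 i + cp x.2 i : ℕ) : ℝ) - 2) * γ)
        = (2 * (k : ℝ) - 2 * ((A x).card : ℝ)) * γ := by
      rw [← Finset.sum_mul]
      congr 1
      rw [Finset.sum_sub_distrib, ← Nat.cast_sum, hmsum, Finset.sum_const, nsmul_eq_mul]
      push_cast; ring
    calc ∏ i ∈ A x, ‖F x.1 x.2 i‖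
        ≤ ∏ i ∈ A x, (D * (n : ℝ) ^ ((((cp x.1 i + cp x.2 i : ℕ) : ℝ) - 2) * γ)) :=
          Finset.prod_le_prod (fun i _ => norm_nonneg _) (fun i hi => hF2 _ _ i (hge2 i hi))
    _ = D ^ (A x).card * ∏ i ∈ A x, (n : ℝ) ^ ((((cp x.1 i + cp x.2 i : ℕ) : ℝ) - 2) * γ) := by
          rw [Finset.prod_mul_distrib, Finset.prod_const]
    _ = D ^ (A x).card * (n : ℝ) ^ ((2 * (k : ℝ) - 2 * ((A x).card : ℝ)) * γ) := by
          rw [aux_rpow_prod _ hnposR, hexpeq]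
    _ ≤ D ^ k * ((n : ℝ) ^ (2 * (k : ℝ) * γ) * (n : ℝ) ^ (-((A x).card : ℝ))) := by
          have hexple : (2 * (k : ℝ) - 2 * ((A x).card : ℝ)) * γ
              ≤ 2 * (k : ℝ) * γ + (-((A x).card : ℝ)) := by
            have hr0 : (0 : ℝ) ≤ ((A x).card : ℝ) := Nat.cast_nonneg _
            nlinarith
          have h5 : (n : ℝ) ^ ((2 * (k : ℝ) - 2 * ((A x).card : ℝ)) * γ)
              ≤ (n : ℝ) ^ (2 * (k : ℝ) * γ) * (n : ℝ) ^ (-((A x).card : ℝ)) := by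
            rw [← Real.rpow_add hnposR]
            exact Real.rpow_le_rpow_of_exponent_le hn1 hexple
          exact mul_le_mul (pow_le_pow_right₀ hD1 hrk) h5
            (Real.rpow_nonneg hnposR.le _) (by positivity)
  have hbad : ∀ x : (Fin k → Fin n) × (Fin k → Fin n), x ∉ good →
      (∫ ω, T x.1 x.2 ω) = 0 := by
    intro x hx
    rw [hgooddef] at hx
    simp only [Finset.mem_filter, Finset.mem_univ, true_and, not_forall] at hx
    obtain ⟨i, hi⟩ := hx
    rw [not_not] at hi
    rw [hTfact]
    exact Finset.prod_eq_zero (Finset.mem_univ i) (hF0 _ _ i hi)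
  -- counting
  have hfiber : ∀ R ∈ good.image A,
      (((good.filter (fun x => A x = R)).card : ℝ)) ≤ (k : ℝ) ^ (2 * k) := by
    intro R hR
    obtain ⟨x0, hx0g, hx0⟩ := Finset.mem_image.mp hR
    have hRk : R.card ≤ k := hx0 ▸ (hAk x0 hx0g).1
    have hsub : good.filter (fun x => A x = R) ⊆
        (Fintype.piFinset fun _ : Fin k => R) ×ˢ (Fintype.piFinset fun _ : Fin k => R) := by
      intro x hx
      obtain ⟨hxg, hxA⟩ := Finset.mem_filter.mp hx
      rw [Finset.mem_product]
      constructor <;> rw [Fintype.mem_piFinset] <;> intro t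
      · rw [← hxA, hAdef]
        exact Finset.mem_union_left _ (Finset.mem_image_of_mem _ (Finset.mem_univ t))
      · rw [← hxA, hAdef]
        exact Finset.mem_union_right _ (Finset.mem_image_of_mem _ (Finset.mem_univ t))
    have hcard : (good.filter (fun x => A x = R)).card ≤ k ^ (2 * k) := by
      calc (good.filter (fun x => A x = R)).card
          ≤ ((Fintype.piFinset fun _ : Fin k => R) ×ˢ
            (Fintype.piFinset fun _ : Fin k => R)).card := Finset.card_le_card hsub
      _ = R.card ^ k * R.card ^ k := by
          rw [Finset.card_product, Fintype.card_piFinset_const]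
      _ ≤ k ^ k * k ^ k :=
          Nat.mul_le_mul (Nat.pow_le_pow_left hRk k) (Nat.pow_le_pow_left hRk k)
      _ = k ^ (2 * k) := by rw [← pow_add, two_mul]
    exact_mod_cast hcard
  have hcount : ∑ x ∈ good, (n : ℝ) ^ (-((A x).card : ℝ)) ≤ ((k : ℝ) + 1) * (k : ℝ) ^ (2 * k) := by
    have hcomp := Finset.sum_comp (s := good)
      (fun R : Finset (Fin n) => (n : ℝ) ^ (-(R.card : ℝ))) A
    rw [hcomp]
    have hinner : ∑ R ∈ good.image A,
        (good.filter (fun x => A x = R)).card • (n : ℝ) ^ (-(R.card : ℝ))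
        ≤ ∑ R ∈ good.image A, (k : ℝ) ^ (2 * k) * (n : ℝ) ^ (-(R.card : ℝ)) := by
      refine Finset.sum_le_sum fun R hR => ?_
      rw [nsmul_eq_mul]
      exact mul_le_mul_of_nonneg_right (hfiber R hR) (Real.rpow_nonneg hnposR.le _)
    refine le_trans hinner ?_
    rw [← Finset.mul_sum]
    rw [mul_comm (((k : ℝ)) + 1) _]
    refine mul_le_mul_of_nonneg_left ?_ (by positivity)
    -- ∑ over image of n^{-card} ≤ k+1
    have himB : good.image A ⊆ (Finset.range (k + 1)).biUnion
        (fun r => Finset.powersetCard r (Finset.univ : Finset (Fin n))) := by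
      intro R hR
      obtain ⟨x0, hx0g, hx0⟩ := Finset.mem_image.mp hR
      have hRk : R.card ≤ k := hx0 ▸ (hAk x0 hx0g).1
      exact Finset.mem_biUnion.mpr ⟨R.card, Finset.mem_range.mpr (by omega),
        Finset.mem_powersetCard_univ.mpr rfl⟩
    have h1 : ∑ R ∈ good.image A, (n : ℝ) ^ (-(R.card : ℝ))
        ≤ ∑ R ∈ (Finset.range (k + 1)).biUnion
            (fun r => Finset.powersetCard r (Finset.univ : Finset (Fin n))),
          (n : ℝ) ^ (-(R.card : ℝ)) :=
      Finset.sum_le_sum_of_subset_of_nonneg himB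
        (fun _ _ _ => Real.rpow_nonneg hnposR.le _)
    refine le_trans h1 ?_
    rw [Finset.sum_biUnion]
    · have h2 : ∀ r ∈ Finset.range (k + 1),
          ∑ R ∈ Finset.powersetCard r (Finset.univ : Finset (Fin n)),
            (n : ℝ) ^ (-(R.card : ℝ)) ≤ 1 := by
        intro r _
        have h3 : ∑ R ∈ Finset.powersetCard r (Finset.univ : Finset (Fin n)),
            (n : ℝ) ^ (-(R.card : ℝ))
            = (n.choose r : ℝ) * (n : ℝ) ^ (-(r : ℝ)) := by
          rw [Finset.sum_congr rfl (fun R hR => by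
            rw [Finset.mem_powersetCard_univ.mp hR] :
            ∀ R ∈ Finset.powersetCard r (Finset.univ : Finset (Fin n)),
              (n : ℝ) ^ (-(R.card : ℝ)) = (n : ℝ) ^ (-(r : ℝ)))]
          rw [Finset.sum_const, Finset.card_powersetCard, Finset.card_univ,
            Fintype.card_fin, nsmul_eq_mul]
        rw [h3]
        have h4 : ((n.choose r : ℕ) : ℝ) ≤ ((n ^ r : ℕ) : ℝ) := by
          exact_mod_cast Nat.choose_le_pow n r
        calc (n.choose r : ℝ) * (n : ℝ) ^ (-(r : ℝ))
            ≤ ((n ^ r : ℕ) : ℝ) * (n : ℝ) ^ (-(r : ℝ)) :=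
              mul_le_mul_of_nonneg_right h4 (Real.rpow_nonneg hnposR.le _)
        _ = 1 := by
              push_cast
              rw [← Real.rpow_natCast (n : ℝ) r, ← Real.rpow_add hnposR]
              simp
      calc ∑ r ∈ Finset.range (k + 1),
          ∑ R ∈ Finset.powersetCard r (Finset.univ : Finset (Fin n)),
            (n : ℝ) ^ (-(R.card : ℝ))
          ≤ ∑ _r ∈ Finset.range (k + 1), (1 : ℝ) := Finset.sum_le_sum h2
      _ = (k : ℝ) + 1 := by rw [Finset.sum_const, Finset.card_range]; push_cast; ring
    · intro r1 _ r2 _ hne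
      refine Finset.disjoint_left.mpr fun R h1 h2 => hne ?_
      rw [← Finset.mem_powersetCard_univ.mp h1, ← Finset.mem_powersetCard_univ.mp h2]
  -- final assembly
  have hstep1 : ∑ x : (Fin k → Fin n) × (Fin k → Fin n), ‖∫ ω, T x.1 x.2 ω‖
      = ∑ p : Fin k → Fin n, ∑ q : Fin k → Fin n, ‖∫ ω, T p q ω‖ :=
    Fintype.sum_prod_type _
  have hstep2 : ∑ x : (Fin k → Fin n) × (Fin k → Fin n), ‖∫ ω, T x.1 x.2 ω‖
      = ∑ x ∈ good, ‖∫ ω, T x.1 x.2 ω‖ :=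
    (Finset.sum_subset (Finset.subset_univ good)
      (fun x _ hx => by rw [hbad x hx, norm_zero])).symm
  have hstep3 : ∑ x ∈ good, ‖∫ ω, T x.1 x.2 ω‖
      ≤ D ^ k * (n : ℝ) ^ (2 * (k : ℝ) * γ) * (((k : ℝ) + 1) * (k : ℝ) ^ (2 * k)) := by
    calc ∑ x ∈ good, ‖∫ ω, T x.1 x.2 ω‖
        ≤ ∑ x ∈ good, D ^ k *
            ((n : ℝ) ^ (2 * (k : ℝ) * γ) * (n : ℝ) ^ (-((A x).card : ℝ))) :=
          Finset.sum_le_sum fun x hx => (hAk x hx).2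
    _ = D ^ k * (n : ℝ) ^ (2 * (k : ℝ) * γ) *
          ∑ x ∈ good, (n : ℝ) ^ (-((A x).card : ℝ)) := by
        rw [Finset.mul_sum]
        exact Finset.sum_congr rfl fun x _ => by ring
    _ ≤ D ^ k * (n : ℝ) ^ (2 * (k : ℝ) * γ) * (((k : ℝ) + 1) * (k : ℝ) ^ (2 * k)) :=
        mul_le_mul_of_nonneg_left hcount (by positivity)
  have hDk0 : (0 : ℝ) ≤ D ^ k := by positivity
  calc (∫ ω, ‖S ω‖ ^ (2 * k))
      ≤ ∑ p : Fin k → Fin n, ∑ q : Fin k → Fin n, ‖∫ ω, T p q ω‖ := hre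
  _ = ∑ x ∈ good, ‖∫ ω, T x.1 x.2 ω‖ := by rw [← hstep1, hstep2]
  _ ≤ D ^ k * (n : ℝ) ^ (2 * (k : ℝ) * γ) * (((k : ℝ) + 1) * (k : ℝ) ^ (2 * k)) := hstep3
  _ ≤ (((k : ℝ) + 1) * (k : ℝ) ^ (2 * k) * D ^ k + 1) * (n : ℝ) ^ (2 * (k : ℝ) * γ) := by
      nlinarith [hrpow0, hDk0]
end
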